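/- arXiv:math/0210354 — 5 statements merged into one kernel-verified Lean document; each statement's English description precedes it below -/
import Mathlib

section
/- Let G be an ω-precompact, sequentially h-complete topological group. Then every continuous surjective homomorphism f : G → H onto a Hausdorff topological group H of countable pseudocharacter is open. -/
open Topology Pointwise

universe u

section Defs
variable (G : Type u) [Group G] [TopologicalSpace G] [IsTopologicalGroup G]

/-- Sequential completeness w.r.t. the canonical group uniformity. -/
def SeqComplete : Prop :=
  letI := IsTopologicalGroup.rightUniformSpace G
  ∀ u : ℕ → G, CauchySeq u → ∃ x, Filter.Tendsto u Filter.atTop (𝓝 x)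

/-- `G` is sequentially h-complete: every continuous homomorphic image is
sequentially complete. -/
def SeqHComplete : Prop :=
  ∀ (H : Type u) [Group H] [TopologicalSpace H] [IsTopologicalGroup H] [T2Space H]
    (f : G →* H), Continuous f → Function.Surjective f → SeqComplete H

/-- `G` is ω-precompact. -/
def OmegaPrecompact : Prop :=
  ∀ U ∈ 𝓝 (1 : G), ∃ F : Set G, F.Countable ∧ U * F = Set.univ

/-- `G` has countable pseudocharacter. -/
def CountablePseudocharacter : Prop :=
  ∃ s : ℕ → Set G, (∀ n, IsOpen (s n)) ∧ (⋂ n, s n) = ({1} : Set G)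

/-- `G` is precompact. -/
def GroupPrecompact : Prop :=
  ∀ U ∈ 𝓝 (1 : G), ∃ F : Set G, F.Finite ∧ U * F = Set.univ

/-- `G` is h-complete: every continuous homomorphic image is complete. -/
def HComplete : Prop :=
  ∀ (H : Type u) [Group H] [TopologicalSpace H] [IsTopologicalGroup H] [T2Space H]
    (f : G →* H), Continuous f → Function.Surjective f →
      letI := IsTopologicalGroup.rightUniformSpace H
      CompleteSpace H

/-- `G` is maximally almost periodic. -/
def MAP : Prop :=
  ∃ (K : Type u) (_ : Group K) (_ : TopologicalSpace K),
    ∃ (_ : IsTopologicalGroup K) (_ : T2Space K) (_ : CompactSpace K),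
      ∃ f : G →* K, Continuous f ∧ Function.Injective f

/-- `G` is minimally almost periodic. -/
def MinAP : Prop :=
  ∀ (K : Type u) [Group K] [TopologicalSpace K] [IsTopologicalGroup K] [T2Space K]
    [CompactSpace K] (f : G →* K), Continuous f → ∀ g : G, f g = 1

/-- `G` is c-compact. -/
def CCompact : Prop :=
  ∀ (H : Type u) [Group H] [TopologicalSpace H] [IsTopologicalGroup H] [T2Space H]
    (S : Subgroup (G × H)), IsClosed (S : Set (G × H)) →
      IsClosed ((S.map (MonoidHom.snd G H) : Subgroup H) : Set H)

/-- `G` is totally minimal. -/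
def TotallyMinimal : Prop :=
  ∀ (H : Type u) [Group H] [TopologicalSpace H] [IsTopologicalGroup H] [T2Space H]
    (f : G →* H), Continuous f → Function.Surjective f → IsOpenMap f

/-- `G` is minimal. -/
def MinimalGroup : Prop :=
  ∀ (H : Type u) [Group H] [TopologicalSpace H] [IsTopologicalGroup H] [T2Space H]
    (f : G →* H), Continuous f → Function.Bijective f → IsOpenMap f

end Defs

/-- `X` has a countable network. -/
def HasCountableNetwork (X : Type u) [TopologicalSpace X] : Prop :=
  ∃ N : Set (Set X), N.Countable ∧ ∀ U : Set X, IsOpen U → ∃ S ⊆ N, ⋃₀ S = U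

section Helpers

variable {G : Type u} [Group G] [TopologicalSpace G] [IsTopologicalGroup G]

theorem my_subset_cube {A : Set G} (h1 : (1:G) ∈ A) : A ⊆ A * A * A := by
  intro a ha
  have : (1:G) * 1 * a = a := by group
  rw [← this]
  exact Set.mul_mem_mul (Set.mul_mem_mul h1 h1) ha

theorem my_symcube {U : Set G} (hU : U ∈ 𝓝 (1:G)) :
    ∃ V : Set G, IsOpen V ∧ (1:G) ∈ V ∧ V⁻¹ = V ∧ V * V * V ⊆ U := by
  obtain ⟨V₁, o1, m1, h1⟩ := exists_open_nhds_one_mul_subset hU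
  obtain ⟨V₂, o2, m2, h2⟩ := exists_open_nhds_one_mul_subset (o1.mem_nhds m1)
  refine ⟨(V₁ ∩ V₂) ∩ (V₁ ∩ V₂)⁻¹, ?_, ⟨⟨m1, m2⟩, by simp [m1, m2]⟩, ?_, ?_⟩
  · exact ((o1.inter o2).inter (o1.inter o2).inv)
  · rw [Set.inter_inv, inv_inv, Set.inter_comm]
  · set V := (V₁ ∩ V₂) ∩ (V₁ ∩ V₂)⁻¹ with hV
    have hVV2 : V ⊆ V₂ := fun x hx => hx.1.2
    have hVV1 : V ⊆ V₁ := fun x hx => hx.1.1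
    calc V * V * V ⊆ V₂ * V₂ * V₁ :=
          Set.mul_subset_mul (Set.mul_subset_mul hVV2 hVV2) hVV1
      _ ⊆ V₁ * V₁ := Set.mul_subset_mul_right h2
      _ ⊆ U := h1

theorem my_cov_enum (hω : OmegaPrecompact G) {V : Set G} (hV : V ∈ 𝓝 (1:G)) :
    ∃ c : ℕ → G, ∀ x : G, ∃ j, ∃ w ∈ V, x = w * c j := by
  obtain ⟨F, hFc, hFcov⟩ := hω V hV
  have hFne : F.Nonempty := by
    rcases Set.eq_empty_or_nonempty F with h | h
    · rw [h, Set.mul_empty] at hFcov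
      exact absurd hFcov Set.empty_ne_univ
    · exact h
  obtain ⟨c, hc⟩ := Set.Countable.exists_eq_range hFc hFne
  refine ⟨c, fun x => ?_⟩
  have hx : x ∈ V * F := by rw [hFcov]; exact Set.mem_univ x
  obtain ⟨w, hw, g, hg, hmul⟩ := hx
  rw [hc] at hg
  obtain ⟨j, rfl⟩ := hg
  exact ⟨j, w, hw, hmul.symm⟩

end Helpers

section Guran

variable {G : Type u} [Group G] [TopologicalSpace G] [IsTopologicalGroup G]

set_option maxHeartbeats 1000000 in
theorem my_guran (hω : OmegaPrecompact G) (T : ℕ → Set G) (hT : ∀ n, T n ∈ 𝓝 (1:G)) :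
    ∃ W : ℕ → Set G, (∀ n, IsOpen (W n)) ∧ (∀ n, (1:G) ∈ W n) ∧ (∀ n, (W n)⁻¹ = W n) ∧
      (∀ n, W (n+1) * W (n+1) * W (n+1) ⊆ W n) ∧ (∀ n, W n ⊆ T n) ∧
      (∀ (x : G) (n : ℕ), ∃ m, ∀ w ∈ W m, x * w * x⁻¹ ∈ W n) := by
  classical
  -- countable cover enumeration as a total function
  obtain ⟨cE, hcE⟩ : ∃ c : Set G → ℕ → G,
      ∀ V, V ∈ 𝓝 (1:G) → ∀ x : G, ∃ j, ∃ w ∈ V, x = w * c V j := by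
    refine ⟨fun V => if h : V ∈ 𝓝 (1:G) then (my_cov_enum hω h).choose else fun _ => 1,
      fun V h x => ?_⟩
    simp only [dif_pos h]
    exact (my_cov_enum hω h).choose_spec x
  -- base set
  obtain ⟨W₀, hW₀o, hW₀1, hW₀s, hW₀c⟩ := my_symcube (hT 0)
  have hW₀T : W₀ ⊆ T 0 := (my_subset_cube hW₀1).trans hW₀c
  -- step existence
  have step : ∀ (n : ℕ) (h : ℕ → Set G), (∀ k ≤ n, IsOpen (h k) ∧ (1:G) ∈ h k) →
      ∃ V : Set G, IsOpen V ∧ (1:G) ∈ V ∧ V⁻¹ = V ∧ V * V * V ⊆ h n ∩ T (n+1) ∧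
        ∀ k ≤ n, ∀ j ≤ n, ∀ n' ≤ n, ∀ w ∈ V,
          cE (h k) j * w * (cE (h k) j)⁻¹ ∈ h n' := by
    intro n h hg
    set K : Set G := ⋂ t : Fin (n+1) × Fin (n+1) × Fin (n+1),
      (fun w => cE (h t.1) t.2.1 * w * (cE (h t.1) t.2.1)⁻¹) ⁻¹' (h t.2.2) with hK
    have hKnhds : K ∈ 𝓝 (1:G) := by
      rw [hK, Filter.iInter_mem]
      rintro ⟨k, j, n'⟩
      have hcont : Continuous fun w : G => cE (h k) j * w * (cE (h k) j)⁻¹ :=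
        (continuous_mul_left _).mul continuous_const
      have h2 : h (n':ℕ) ∈ 𝓝 (cE (h (k:ℕ)) (j:ℕ) * 1 * (cE (h (k:ℕ)) (j:ℕ))⁻¹) := by
        simpa using ((hg n' (Nat.lt_succ_iff.mp n'.2)).1).mem_nhds
          (hg n' (Nat.lt_succ_iff.mp n'.2)).2
      exact hcont.continuousAt.preimage_mem_nhds h2
    have hN : h n ∩ T (n+1) ∩ K ∈ 𝓝 (1:G) := by
      refine Filter.inter_mem (Filter.inter_mem ?_ (hT (n+1))) hKnhds
      exact ((hg n le_rfl).1).mem_nhds (hg n le_rfl).2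
    obtain ⟨V, hVo, hV1, hVs, hVc⟩ := my_symcube hN
    refine ⟨V, hVo, hV1, hVs, (hVc.trans Set.inter_subset_left), ?_⟩
    intro k hk j hj n' hn' w hw
    have hwK : w ∈ K := ((my_subset_cube hV1).trans (hVc.trans Set.inter_subset_right)) hw
    rw [hK] at hwK
    exact Set.mem_iInter.mp hwK ⟨⟨k, Nat.lt_succ_of_le hk⟩, ⟨j, Nat.lt_succ_of_le hj⟩,
      ⟨n', Nat.lt_succ_of_le hn'⟩⟩
  -- next-set function
  obtain ⟨next, hnext⟩ : ∃ next : ℕ → (ℕ → Set G) → Set G,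
      ∀ (n : ℕ) (h : ℕ → Set G), (∀ k ≤ n, IsOpen (h k) ∧ (1:G) ∈ h k) →
        IsOpen (next n h) ∧ (1:G) ∈ next n h ∧ (next n h)⁻¹ = next n h ∧
          next n h * next n h * next n h ⊆ h n ∩ T (n+1) ∧
          ∀ k ≤ n, ∀ j ≤ n, ∀ n' ≤ n, ∀ w ∈ next n h,
            cE (h k) j * w * (cE (h k) j)⁻¹ ∈ h n' := by
    refine ⟨fun n h => if hg : (∀ k ≤ n, IsOpen (h k) ∧ (1:G) ∈ h k)
      then (step n h hg).choose else ∅, fun n h hg => ?_⟩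
    simp only [dif_pos hg]
    exact (step n h hg).choose_spec
  -- history recursion
  obtain ⟨hist, hist0, histS⟩ : ∃ hist : ℕ → ℕ → Set G,
      hist 0 = (fun _ => W₀) ∧
        ∀ n, hist (n+1) = Function.update (hist n) (n+1) (next n (hist n)) :=
    ⟨fun n => Nat.rec (fun _ => W₀)
      (fun n ih => Function.update ih (n+1) (next n ih)) n, rfl, fun _ => rfl⟩
  set W : ℕ → Set G := fun n => hist n n with hWdef
  have hW0 : W 0 = W₀ := by show hist 0 0 = W₀; rw [hist0]
  -- stability
  have hstab : ∀ n m, m ≤ n → hist n m = W m := by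
    intro n
    induction n with
    | zero => intro m hm; interval_cases m; rfl
    | succ n ih =>
      intro m hm
      rcases Nat.eq_or_lt_of_le hm with rfl | hlt
      · rfl
      · have hmn : m ≤ n := Nat.lt_succ_iff.mp hlt
        rw [histS n, Function.update_of_ne (by omega : m ≠ n + 1)]
        exact ih m hmn
  have histSucc_self : ∀ n, W (n+1) = next n (hist n) := by
    intro n
    show hist (n+1) (n+1) = _
    rw [histS n, Function.update_self]
  -- basic openness/one, by strong induction
  have hbasic : ∀ n, IsOpen (W n) ∧ (1:G) ∈ W n := by
    intro n
    induction n using Nat.strong_induction_on with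
    | _ n ih =>
      match n with
      | 0 => rw [hW0]; exact ⟨hW₀o, hW₀1⟩
      | (n+1) =>
        have hg : ∀ k ≤ n, IsOpen (hist n k) ∧ (1:G) ∈ hist n k := by
          intro k hk
          rw [hstab n k hk]
          exact ih k (Nat.lt_succ_of_le hk)
        have := hnext n (hist n) hg
        rw [← histSucc_self n] at this
        exact ⟨this.1, this.2.1⟩
  -- full spec at each successor
  have hspec : ∀ n, (W (n+1))⁻¹ = W (n+1) ∧
      W (n+1) * W (n+1) * W (n+1) ⊆ W n ∩ T (n+1) ∧
      ∀ k ≤ n, ∀ j ≤ n, ∀ n' ≤ n, ∀ w ∈ W (n+1),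
        cE (W k) j * w * (cE (W k) j)⁻¹ ∈ W n' := by
    intro n
    have hg : ∀ k ≤ n, IsOpen (hist n k) ∧ (1:G) ∈ hist n k := by
      intro k hk; rw [hstab n k hk]; exact hbasic k
    have H := hnext n (hist n) hg
    rw [← histSucc_self n] at H
    refine ⟨H.2.2.1, ?_, ?_⟩
    · have := H.2.2.2.1
      rwa [hstab n n le_rfl] at this
    · intro k hk j hj n' hn' w hw
      have := H.2.2.2.2 k hk j hj n' hn' w hw
      rwa [hstab n k hk, hstab n n' hn'] at this
  have hWsymm : ∀ n, (W n)⁻¹ = W n := by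
    intro n
    match n with
    | 0 => rw [hW0]; exact hW₀s
    | (n+1) => exact (hspec n).1
  have hWcube : ∀ n, W (n+1) * W (n+1) * W (n+1) ⊆ W n :=
    fun n => ((hspec n).2.1).trans Set.inter_subset_left
  have hWT : ∀ n, W n ⊆ T n := by
    intro n
    match n with
    | 0 => rw [hW0]; exact hW₀T
    | (n+1) => exact ((my_subset_cube (hbasic (n+1)).2).trans
        ((hspec n).2.1)).trans Set.inter_subset_right
  have hWsub : ∀ n, W (n+1) ⊆ W n :=
    fun n => (my_subset_cube (hbasic (n+1)).2).trans (hWcube n)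
  have hWmono : ∀ m n, m ≤ n → W n ⊆ W m := by
    intro m n hmn
    induction n with
    | zero => rw [Nat.le_zero.mp hmn]
    | succ n ih =>
      rcases Nat.eq_or_lt_of_le hmn with rfl | hlt
      · rfl
      · exact (hWsub n).trans (ih (Nat.lt_succ_iff.mp hlt))
  -- conjugation property
  have hconj : ∀ (x : G) (n : ℕ), ∃ m, ∀ w ∈ W m, x * w * x⁻¹ ∈ W n := by
    intro x n
    have hWn2 : W (n+2) ∈ 𝓝 (1:G) := ((hbasic (n+2)).1).mem_nhds (hbasic (n+2)).2
    obtain ⟨j, w, hw, hx⟩ := hcE (W (n+2)) hWn2 x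
    set c := cE (W (n+2)) j with hc
    set N₀ := max (n+2) j with hN₀
    refine ⟨N₀ + 1, fun w' hw' => ?_⟩
    have hcon : c * w' * c⁻¹ ∈ W (n+2) :=
      (hspec N₀).2.2 (n+2) (le_max_left _ _) j (le_max_right _ _) (n+2) (le_max_left _ _) w' hw'
    have hxw : x * w' * x⁻¹ = w * (c * w' * c⁻¹) * w⁻¹ := by
      rw [hx]; group
    rw [hxw]
    have hwinv : w⁻¹ ∈ W (n+2) := by
      rw [← hWsymm (n+2)]; exact Set.inv_mem_inv.mpr hw
    have : w * (c * w' * c⁻¹) * w⁻¹ ∈ W (n+2) * W (n+2) * W (n+2) :=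
      Set.mul_mem_mul (Set.mul_mem_mul hw hcon) hwinv
    exact hWmono n (n+1) (Nat.le_succ n) (hWcube (n+1) this)
  exact ⟨W, fun n => (hbasic n).1, fun n => (hbasic n).2, hWsymm, hWcube, hWT, hconj⟩

end Guran

section GFB

variable {G : Type u} [Group G]

/-- Build a group filter basis from a Guran sequence. -/
def mkGFB (W : ℕ → Set G) (h1 : ∀ n, (1:G) ∈ W n)
    (hmono : ∀ m n, m ≤ n → W n ⊆ W m)
    (hsymm : ∀ n, (W n)⁻¹ = W n)
    (hcube : ∀ n, W (n+1) * W (n+1) * W (n+1) ⊆ W n)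
    (hconj : ∀ x n, ∃ m, ∀ w ∈ W m, x * w * x⁻¹ ∈ W n) : GroupFilterBasis G where
  sets := Set.range W
  nonempty := ⟨W 0, 0, rfl⟩
  inter_sets := by
    rintro x y ⟨m, rfl⟩ ⟨n, rfl⟩
    exact ⟨W (max m n), ⟨max m n, rfl⟩,
      Set.subset_inter (hmono m _ (le_max_left m n)) (hmono n _ (le_max_right m n))⟩
  one' := by rintro U ⟨n, rfl⟩; exact h1 n
  mul' := by
    rintro U ⟨n, rfl⟩
    refine ⟨W (n+1), ⟨n+1, rfl⟩, ?_⟩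
    exact (Set.subset_mul_left _ (h1 (n+1))).trans (hcube n)
  inv' := by
    rintro U ⟨n, rfl⟩
    refine ⟨W n, ⟨n, rfl⟩, fun x hx => ?_⟩
    show x⁻¹ ∈ W n
    rw [← hsymm n]
    exact Set.inv_mem_inv.mpr hx
  conj' := by
    rintro x₀ U ⟨n, rfl⟩
    obtain ⟨m, hm⟩ := hconj x₀ n
    exact ⟨W m, ⟨m, rfl⟩, fun w hw => hm w hw⟩

theorem mkGFB_nhds_one_basis (W : ℕ → Set G) (h1 : ∀ n, (1:G) ∈ W n)
    (hmono : ∀ m n, m ≤ n → W n ⊆ W m) (hsymm : ∀ n, (W n)⁻¹ = W n)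
    (hcube : ∀ n, W (n+1) * W (n+1) * W (n+1) ⊆ W n)
    (hconj : ∀ x n, ∃ m, ∀ w ∈ W m, x * w * x⁻¹ ∈ W n) :
    (@nhds G (mkGFB W h1 hmono hsymm hcube hconj).topology 1).HasBasis
      (fun _ : ℕ => True) W := by
  refine ((mkGFB W h1 hmono hsymm hcube hconj).nhds_one_hasBasis).to_hasBasis ?_ ?_
  · rintro V ⟨n, rfl⟩
    exact ⟨n, trivial, le_rfl⟩
  · intro n _
    exact ⟨W n, ⟨n, rfl⟩, le_rfl⟩

end GFB

/-- Type copy used to install alternative topologies. -/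
def MyCopy (α : Type u) : Type u := α

def toMyCopy {α : Type u} (a : α) : MyCopy α := a



section MoreHelpers

variable {G : Type u} [Group G] [TopologicalSpace G] [IsTopologicalGroup G]

set_option linter.unusedSectionVars false

theorem my_antitone {X : Type*} (A : ℕ → Set X) (h : ∀ n, A (n+1) ⊆ A n) :
    ∀ m n, m ≤ n → A n ⊆ A m := by
  intro m n hmn
  induction n with
  | zero => rw [Nat.le_zero.mp hmn]
  | succ n ih =>
    rcases Nat.eq_or_lt_of_le hmn with rfl | hlt
    · rfl
    · exact (h n).trans (ih (Nat.lt_succ_iff.mp hlt))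

theorem my_image_symm {K : Type*} [Group K] (φ : G →* K) {A : Set G} (hA : A⁻¹ = A) :
    (φ '' A)⁻¹ = φ '' A := by
  ext y
  simp only [Set.mem_inv, Set.mem_image]
  constructor
  · rintro ⟨x, hx, hxy⟩
    refine ⟨x⁻¹, ?_, ?_⟩
    · rw [← hA]; exact Set.inv_mem_inv.mpr hx
    · rw [map_inv, hxy, inv_inv]
  · rintro ⟨x, hx, rfl⟩
    refine ⟨x⁻¹, ?_, ?_⟩
    · rw [← hA]; exact Set.inv_mem_inv.mpr hx
    · rw [map_inv]

theorem my_mul_closure_subset {A : Set G} {B : Set G} :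
    closure A * B ⊆ closure (A * B) := by
  rintro _ ⟨a, ha, b, hb, rfl⟩
  have h1 : a * b ∈ (Homeomorph.mulRight b) '' closure A := ⟨a, ha, rfl⟩
  rw [(Homeomorph.mulRight b).image_closure] at h1
  refine closure_mono ?_ h1
  rintro _ ⟨x, hx, rfl⟩
  exact Set.mul_mem_mul hx hb

theorem my_closure_mul_closure {A B : Set G} :
    closure A * closure B ⊆ closure (A * B) := by
  rintro _ ⟨a, ha, b, hb, rfl⟩
  have h1 : a * b ∈ (Homeomorph.mulLeft a) '' closure B := ⟨b, hb, rfl⟩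
  rw [(Homeomorph.mulLeft a).image_closure] at h1
  have h2 : (Homeomorph.mulLeft a) '' B ⊆ closure A * B := by
    rintro _ ⟨x, hx, rfl⟩
    exact Set.mul_mem_mul ha hx
  have h3 : a * b ∈ closure (closure A * B) := closure_mono h2 h1
  have h4 : closure (closure A * B) ⊆ closure (A * B) := by
    rw [← closure_closure (s := A * B)]
    exact closure_mono my_mul_closure_subset
  exact h4 h3

theorem my_closure_subset_mul {A V : Set G} (hV : V ∈ 𝓝 (1:G)) (hVs : V⁻¹ = V) :
    closure A ⊆ A * V := by
  intro x hx
  have hnb : (fun v => x * v) '' V ∈ 𝓝 x := by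
    rw [← map_mul_left_nhds_one x]
    exact Filter.image_mem_map hV
  obtain ⟨a, ⟨v, hv, hxa⟩, haA⟩ := mem_closure_iff_nhds.mp hx _ hnb
  refine ⟨a, haA, v⁻¹, ?_, ?_⟩
  · rw [← hVs]; exact Set.inv_mem_inv.mpr hv
  · rw [← hxa]; group

end MoreHelpers

open Filter Uniformity in
set_option maxHeartbeats 2000000 in
/-- Every continuous surjective homomorphism from an ω-precompact sequentially
h-complete group onto a Hausdorff group of countable pseudocharacter is open. -/
theorem stmt0 (G : Type u) [Group G] [TopologicalSpace G] [IsTopologicalGroup G] [T2Space G]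
    (hω : OmegaPrecompact G) (hs : SeqHComplete G)
    (H : Type u) [Group H] [TopologicalSpace H] [IsTopologicalGroup H] [T2Space H]
    (hψ : CountablePseudocharacter H)
    (f : G →* H) (hf : Continuous f) (hsurj : Function.Surjective f) :
    IsOpenMap f := by
  classical
  suffices key : ∀ U ∈ 𝓝 (1:G), f '' U ∈ 𝓝 (1:H) by
    intro V hV
    rw [isOpen_iff_mem_nhds]
    rintro _ ⟨x, hxV, rfl⟩
    have h1 : (fun g => x⁻¹ * g) '' V ∈ 𝓝 (1:G) := by
      have ho : IsOpen ((fun g => x⁻¹ * g) '' V) := (Homeomorph.mulLeft x⁻¹).isOpenMap V hV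
      exact ho.mem_nhds ⟨x, hxV, by group⟩
    obtain ⟨O', hO'sub, hO'open, hO'mem⟩ := mem_nhds_iff.mp (key _ h1)
    rw [mem_nhds_iff]
    refine ⟨(fun h => f x * h) '' O', ?_, (Homeomorph.mulLeft (f x)).isOpenMap O' hO'open, ?_⟩
    · rintro _ ⟨z, hz, rfl⟩
      obtain ⟨_, ⟨v, hvV, rfl⟩, rfl⟩ := hO'sub hz
      refine ⟨v, hvV, ?_⟩
      show f v = f x * f (x⁻¹ * v)
      rw [← map_mul]
      congr 1
      group
    · exact ⟨1, hO'mem, mul_one _⟩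
  intro U hU
  -- `H` is ω-precompact
  have hωH : OmegaPrecompact H := by
    intro V hV
    have hpre : f ⁻¹' V ∈ 𝓝 (1:G) :=
      hf.continuousAt.preimage_mem_nhds (by rw [map_one]; exact hV)
    obtain ⟨F, hFc, hFcov⟩ := hω (f ⁻¹' V) hpre
    refine ⟨f '' F, hFc.image f, ?_⟩
    apply Set.eq_univ_of_univ_subset
    intro y _
    obtain ⟨x, rfl⟩ := hsurj y
    have hx : x ∈ f ⁻¹' V * F := by rw [hFcov]; exact Set.mem_univ x
    obtain ⟨a, ha, b, hb, rfl⟩ := hx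
    exact ⟨f a, ha, f b, ⟨b, hb, rfl⟩, (map_mul f a b).symm⟩
  -- pseudocharacter witnesses
  obtain ⟨s, hsopen, hsint⟩ := hψ
  have hs1 : ∀ n, (1:H) ∈ s n := by
    intro n
    have h1 : (1:H) ∈ ⋂ n, s n := by rw [hsint]; exact Set.mem_singleton 1
    exact Set.mem_iInter.mp h1 n
  -- Guran sequence in H
  obtain ⟨O, hOopen, hO1, hOsymm, hOcube, hOs, hOconj⟩ :=
    my_guran hωH s (fun n => (hsopen n).mem_nhds (hs1 n))
  have hOsub : ∀ n, O (n+1) ⊆ O n :=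
    fun n => (my_subset_cube (hO1 (n+1))).trans (hOcube n)
  have hOmono : ∀ m n, m ≤ n → O n ⊆ O m := my_antitone O hOsub
  have hOint : (⋂ n, O n) = ({1} : Set H) := by
    apply subset_antisymm
    · rw [← hsint]
      exact Set.iInter_mono hOs
    · intro x hx
      rw [Set.mem_singleton_iff] at hx
      subst hx
      exact Set.mem_iInter.mpr hO1
  -- Guran sequence in G, refining U and f ⁻¹' (O n)
  have hTnhds : ∀ n, (U ∩ f ⁻¹' (O n)) ∈ 𝓝 (1:G) := by
    intro n
    refine Filter.inter_mem hU (hf.continuousAt.preimage_mem_nhds ?_)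
    rw [map_one]
    exact (hOopen n).mem_nhds (hO1 n)
  obtain ⟨W, hWopen, hW1, hWsymm, hWcube, hWT, hWconj⟩ :=
    my_guran hω (fun n => U ∩ f ⁻¹' (O n)) hTnhds
  have hWU : ∀ n, W n ⊆ U := fun n => (hWT n).trans Set.inter_subset_left
  have hWO : ∀ n, f '' W n ⊆ O n := by
    intro n
    rw [Set.image_subset_iff]
    exact (hWT n).trans Set.inter_subset_right
  have hWsub : ∀ n, W (n+1) ⊆ W n :=
    fun n => (my_subset_cube (hW1 (n+1))).trans (hWcube n)
  have hWmono : ∀ m n, m ≤ n → W n ⊆ W m := my_antitone W hWsub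
  -- The metrizable image group M = (H, topology generated by the O n)
  let BH : GroupFilterBasis H := mkGFB O hO1 hOmono hOsymm hOcube hOconj
  letI : TopologicalSpace (MyCopy H) := BH.topology
  letI : Group (MyCopy H) := inferInstanceAs (Group H)
  haveI : IsTopologicalGroup (MyCopy H) := BH.isTopologicalGroup
  have hMbasis : (𝓝 (1 : MyCopy H)).HasBasis (fun _ : ℕ => True) O :=
    mkGFB_nhds_one_basis O hO1 hOmono hOsymm hOcube hOconj
  let fM : G →* MyCopy H :=
    { toFun := fun g => toMyCopy (f g)
      map_one' := map_one f
      map_mul' := map_mul f }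
  have hfM : Continuous fM := by
    apply continuous_of_continuousAt_one fM
    unfold ContinuousAt
    rw [map_one fM, hMbasis.tendsto_right_iff]
    intro n _
    refine Filter.mem_of_superset ((hWopen n).mem_nhds (hW1 n)) ?_
    intro x hx
    exact hWO n ⟨x, hx, rfl⟩
  have hfMsurj : Function.Surjective fM := hsurj
  -- M is Hausdorff
  have hM1closed : IsClosed ({1} : Set (MyCopy H)) := by
    have hsub : closure ({1} : Set (MyCopy H)) ⊆ {1} := by
      intro x hx
      have hxO : ∀ n, x ∈ O n := by
        intro n
        have hnb : (fun y => x * y) '' (O n) ∈ 𝓝 x := by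
          rw [← map_mul_left_nhds_one x]
          exact Filter.image_mem_map (hMbasis.mem_of_mem trivial)
        obtain ⟨a, ⟨o, ho, hxo⟩, ha1⟩ := mem_closure_iff_nhds.mp hx _ hnb
        rw [Set.mem_singleton_iff] at ha1
        rw [ha1] at hxo
        have hoinv : o = x⁻¹ := eq_inv_of_mul_eq_one_right hxo
        have : x⁻¹ ∈ O n := hoinv ▸ ho
        have h2 : (x⁻¹)⁻¹ ∈ (O n)⁻¹ := Set.inv_mem_inv.mpr this
        rw [hOsymm n] at h2
        rwa [inv_inv] at h2
      have : x ∈ ⋂ n, O n := Set.mem_iInter.mpr hxO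
      rw [hOint] at this
      exact this
    exact isClosed_of_closure_subset hsub
  haveI hMT1 : T1Space (MyCopy H) := IsTopologicalGroup.t1Space _ hM1closed
  haveI hMT2 : T2Space (MyCopy H) := (IsTopologicalGroup.t2Space_iff_one_closed).mpr hM1closed
  -- M is sequentially complete, hence complete, hence Baire
  have hSCM : SeqComplete (MyCopy H) := hs (MyCopy H) fM hfM hfMsurj
  letI uM : UniformSpace (MyCopy H) := IsTopologicalGroup.rightUniformSpace (MyCopy H)
  have hUM : 𝓤 (MyCopy H) = Filter.comap (fun p : MyCopy H × MyCopy H => p.2 / p.1) (𝓝 1) := by simp only [div_eq_mul_inv]; rfl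
  haveI hUMcg : (𝓤 (MyCopy H)).IsCountablyGenerated := by
    rw [hUM]
    exact (hMbasis.comap _).isCountablyGenerated
  haveI hCM : CompleteSpace (MyCopy H) := UniformSpace.complete_of_cauchySeq_tendsto hSCM
  haveI hBaireM : BaireSpace (MyCopy H) := inferInstance
  -- images in M are symmetric
  have hAsymm : ∀ n, (fM '' W n)⁻¹ = fM '' W n := fun n => my_image_symm fM (hWsymm n)
  -- Baire category: closures of images of the W n are neighborhoods of 1 in M
  haveI : Nonempty (MyCopy H) := ⟨1⟩
  have hBaire : ∀ k, closure (fM '' W k) ∈ 𝓝 (1 : MyCopy H) := by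
    intro k
    set A : Set (MyCopy H) := fM '' W (k+1) with hA
    -- countable cover of M by right translates of closure A
    obtain ⟨c, hc⟩ := my_cov_enum hω (((hWopen (k+1)).mem_nhds (hW1 (k+1))) : W (k+1) ∈ 𝓝 (1:G))
    have hcover : (⋃ j : ℕ, (fun z => z * fM (c j)) '' closure A) = Set.univ := by
      apply Set.eq_univ_of_univ_subset
      intro y _
      obtain ⟨x, rfl⟩ := hfMsurj y
      obtain ⟨j, w, hw, hxw⟩ := hc x
      refine Set.mem_iUnion.mpr ⟨j, fM w, subset_closure ⟨w, hw, rfl⟩, ?_⟩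
      show fM w * fM (c j) = fM x
      rw [← map_mul, ← hxw]
    have hclosed : ∀ j : ℕ, IsClosed ((fun z => z * fM (c j)) '' closure A) := fun j =>
      (Homeomorph.mulRight (fM (c j))).isClosedMap _ isClosed_closure
    obtain ⟨j, hj⟩ := nonempty_interior_of_iUnion_of_closed hclosed hcover
    -- translate interior point back
    have hint : ((Homeomorph.mulRight (fM (c j))) '' interior (closure A)).Nonempty := by
      rwa [Homeomorph.image_interior]
    obtain ⟨_, ⟨p, hp, rfl⟩⟩ := hint
    -- now p ∈ interior (closure A)
    have hpcl : p ∈ closure A := interior_subset hp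
    have hpinv : p⁻¹ ∈ closure A := by
      have h2 : p⁻¹ ∈ (closure A)⁻¹ := Set.inv_mem_inv.mpr hpcl
      rwa [inv_closure, hAsymm (k+1)] at h2
    -- the open set p⁻¹ • interior (closure A) works
    rw [mem_nhds_iff]
    refine ⟨(fun z => p⁻¹ * z) '' interior (closure A), ?_,
      (Homeomorph.mulLeft p⁻¹).isOpenMap _ isOpen_interior, ⟨p, hp, by group⟩⟩
    rintro _ ⟨z, hz, rfl⟩
    have hmem : p⁻¹ * z ∈ closure A * closure A :=
      Set.mul_mem_mul hpinv (interior_subset hz)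
    have h3 : closure A * closure A ⊆ closure (fM '' W k) := by
      refine my_closure_mul_closure.trans (closure_mono ?_)
      rw [hA, ← Set.image_mul]
      exact Set.image_mono ((Set.subset_mul_left _ (hW1 (k+1))).trans (hWcube k))
    exact h3 hmem
  -- images of W in M are inside O
  have hWOM : ∀ n, fM '' W n ⊆ (O n : Set (MyCopy H)) := by
    rintro n _ ⟨x, hx, rfl⟩
    exact hWO n ⟨x, hx, rfl⟩
  let OM : ℕ → Set (MyCopy H) := fun n => O n
  have hOnb : ∀ n, OM n ∈ 𝓝 (1 : MyCopy H) :=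
    fun n => hMbasis.mem_of_mem trivial
  have hOsq : ∀ n, (O (n+1) : Set H) * O (n+1) ⊆ O n :=
    fun n => (Set.subset_mul_left _ (hO1 (n+1))).trans (hOcube n)
  have hclO : ∀ n, closure (fM '' W (n+1)) ⊆ (O n : Set (MyCopy H)) := by
    intro n
    have hVs : (OM (n+1))⁻¹ = OM (n+1) := hOsymm (n+1)
    have h1 : closure (fM '' W (n+1)) ⊆ (fM '' W (n+1)) * OM (n+1) :=
      my_closure_subset_mul (hOnb (n+1)) hVs
    refine h1.trans ?_
    refine (Set.mul_subset_mul_right (hWOM (n+1))).trans ?_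
    exact (hOsq n : OM (n+1) * OM (n+1) ⊆ OM n)
  -- the quotient group Q
  let BG : GroupFilterBasis G := mkGFB W hW1 hWmono hWsymm hWcube hWconj
  letI : TopologicalSpace (MyCopy G) := BG.topology
  letI : Group (MyCopy G) := inferInstanceAs (Group G)
  haveI : IsTopologicalGroup (MyCopy G) := BG.isTopologicalGroup
  have hGbasis : (𝓝 (1 : MyCopy G)).HasBasis (fun _ : ℕ => True) W :=
    mkGFB_nhds_one_basis W hW1 hWmono hWsymm hWcube hWconj
  let jG : G →* MyCopy G := { toFun := toMyCopy, map_one' := rfl, map_mul' := fun _ _ => rfl }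
  have hjG : Continuous jG := by
    apply continuous_of_continuousAt_one jG
    unfold ContinuousAt
    rw [map_one jG, hGbasis.tendsto_right_iff]
    intro n _
    exact Filter.mem_of_superset ((hWopen n).mem_nhds (hW1 n)) (fun x hx => hx)
  let N : Subgroup (MyCopy G) := (⊥ : Subgroup (MyCopy G)).topologicalClosure
  haveI hNnormal : N.Normal := Subgroup.is_normal_topologicalClosure ⊥
  haveI hNclosed : IsClosed (N : Set (MyCopy G)) := Subgroup.isClosed_topologicalClosure ⊥
  haveI : IsTopologicalGroup (MyCopy G ⧸ N) := inferInstance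
  haveI : T3Space (MyCopy G ⧸ N) := inferInstance
  let q : MyCopy G →* MyCopy G ⧸ N := QuotientGroup.mk' N
  have hqcont : Continuous q := (QuotientGroup.isQuotientMap_mk N).continuous
  have hqG : Continuous (q.comp jG) := hqcont.comp hjG
  have hqGsurj : Function.Surjective (q.comp jG) := fun y => by
    obtain ⟨x, hx⟩ := QuotientGroup.mk'_surjective N y
    exact ⟨x, hx⟩
  have hQbasis : (𝓝 (1 : MyCopy G ⧸ N)).HasBasis (fun _ : ℕ => True) (fun n => q '' W n) := by
    have h0 : 𝓝 (1 : MyCopy G ⧸ N) = Filter.map q (𝓝 (1 : MyCopy G)) :=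
      QuotientGroup.nhds_eq N 1
    rw [h0]
    exact hGbasis.map q
  letI uQ : UniformSpace (MyCopy G ⧸ N) := IsTopologicalGroup.rightUniformSpace _
  have hQUbasis : (𝓤 (MyCopy G ⧸ N)).HasBasis (fun _ : ℕ => True)
      (fun n => (fun pp : (MyCopy G ⧸ N) × (MyCopy G ⧸ N) => pp.2 / pp.1) ⁻¹' (q '' W n)) := by
    have hUQ : 𝓤 (MyCopy G ⧸ N) =
        Filter.comap (fun pp : (MyCopy G ⧸ N) × (MyCopy G ⧸ N) => pp.2 / pp.1) (𝓝 1) := by simp only [div_eq_mul_inv]; rfl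
    rw [hUQ]
    exact hQbasis.comap _
  have hSCQ : SeqComplete (MyCopy G ⧸ N) := hs _ (q.comp jG) hqG hqGsurj
  have hqWsymm : ∀ n, (q '' W n)⁻¹ = q '' W n := fun n => my_image_symm q (hWsymm n)
  have hqWnb : ∀ n, q '' W n ∈ 𝓝 (1 : MyCopy G ⧸ N) := fun n => hQbasis.mem_of_mem trivial
  -- the induced map φ : Q → M
  let fM' : MyCopy G →* MyCopy H :=
    { toFun := fun x => fM x, map_one' := map_one fM, map_mul' := map_mul fM }
  have hfM'cont : Continuous fM' := by
    apply continuous_of_continuousAt_one fM'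
    unfold ContinuousAt
    rw [map_one fM', hMbasis.tendsto_right_iff]
    intro n _
    refine Filter.mem_of_superset (hGbasis.mem_of_mem (i := n) trivial) ?_
    intro x hx
    exact hWO n ⟨x, hx, rfl⟩
  have hker : N ≤ fM'.ker := by
    intro x hx
    rw [MonoidHom.mem_ker]
    have hx' : x ∈ closure (((⊥ : Subgroup (MyCopy G)) : Set (MyCopy G))) := hx
    have h2 : fM' x ∈ closure (fM' '' ((⊥ : Subgroup (MyCopy G)) : Set (MyCopy G))) :=
      (image_closure_subset_closure_image hfM'cont) ⟨x, hx', rfl⟩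
    have h3 : fM' '' ((⊥ : Subgroup (MyCopy G)) : Set (MyCopy G)) = {1} := by
      rw [Subgroup.coe_bot, Set.image_singleton, map_one]
    rw [h3, hM1closed.closure_eq] at h2
    exact h2
  let φ : (MyCopy G ⧸ N) →* MyCopy H := QuotientGroup.lift N fM' hker
  have hφq : ∀ x : MyCopy G, φ (q x) = fM' x := fun x => QuotientGroup.lift_mk' N hker x
  have hφcont : Continuous φ := by
    rw [(QuotientGroup.isQuotientMap_mk N).continuous_iff]
    have heq : (⇑φ ∘ (QuotientGroup.mk : MyCopy G → MyCopy G ⧸ N)) = ⇑fM' :=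
      funext fun x => QuotientGroup.lift_mk' N hker x
    rw [heq]
    exact hfM'cont
  -- main containment
  have hkey2 : closure (fM '' W 3) ⊆ f '' U := by
    intro y hy
    have stepC : ∀ (m : ℕ) (z : MyCopy H), z ∈ closure (fM '' W m) →
        ∃ g : G, g ∈ W m ∧ z * (fM g)⁻¹ ∈ closure (fM '' W (m+1)) := by
      intro m z hz
      have hB : closure (fM '' W (m+1)) ∈ 𝓝 (1 : MyCopy H) := hBaire (m+1)
      have hBsymm : (closure (fM '' W (m+1)))⁻¹ = closure (fM '' W (m+1)) := by
        rw [inv_closure, hAsymm (m+1)]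
      have hnb : (fun b => b * z) '' closure (fM '' W (m+1)) ∈ 𝓝 z := by
        rw [← map_mul_right_nhds_one z]
        exact Filter.image_mem_map hB
      obtain ⟨a, ⟨b, hb, hbz⟩, haA⟩ := mem_closure_iff_nhds.mp hz _ hnb
      have hab : b * z = a := hbz
      obtain ⟨g, hgW, hga⟩ := haA
      refine ⟨g, hgW, ?_⟩
      rw [hga, ← hab]
      have h5 : z * (b * z)⁻¹ = b⁻¹ := by group
      rw [h5, ← hBsymm]
      exact Set.inv_mem_inv.mpr hb
    obtain ⟨SF, hSF⟩ : ∃ SF : ℕ → MyCopy H → G, ∀ m z, z ∈ closure (fM '' W m) →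
        SF m z ∈ W m ∧ z * (fM (SF m z))⁻¹ ∈ closure (fM '' W (m+1)) := by
      refine ⟨fun m z => if hz : z ∈ closure (fM '' W m) then (stepC m z hz).choose else 1,
        fun m z hz => ?_⟩
      simp only [dif_pos hz]
      exact (stepC m z hz).choose_spec
    obtain ⟨zs, gg, hzs0, hgg, hzsS⟩ : ∃ (zs : ℕ → MyCopy H) (gg : ℕ → G), zs 0 = y ∧
        (∀ m, gg m = SF (3+m) (zs m)) ∧ ∀ m, zs (m+1) = zs m * (fM (gg m))⁻¹ :=
      ⟨fun m => Nat.rec y (fun m ih => ih * (fM (SF (3+m) ih))⁻¹) m, _, rfl,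
        fun _ => rfl, fun _ => rfl⟩
    have hzscl : ∀ m, zs m ∈ closure (fM '' W (3+m)) := by
      intro m
      induction m with
      | zero => rw [hzs0]; exact hy
      | succ m ih =>
        rw [hzsS m, hgg m]
        exact (hSF (3+m) (zs m) ih).2
    have hgW : ∀ m, gg m ∈ W (3+m) := by
      intro m
      rw [hgg m]
      exact (hSF (3+m) (zs m) (hzscl m)).1
    obtain ⟨p, hp0, hpS⟩ : ∃ p : ℕ → G, p 0 = gg 0 ∧ ∀ m, p (m+1) = gg (m+1) * p m :=
      ⟨fun m => Nat.rec (gg 0) (fun m ih => gg (m+1) * ih) m, rfl, fun _ => rfl⟩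
    have hyp : ∀ m, y * (fM (p m))⁻¹ = zs (m+1) := by
      intro m
      induction m with
      | zero => rw [hp0, hzsS 0, hzs0]
      | succ m ih =>
        rw [hpS m, hzsS (m+1), ← ih, map_mul]
        group
    have hpdiff : ∀ d j, p (j + d) * (p j)⁻¹ ∈ W (3 + j) := by
      intro d
      induction d with
      | zero =>
        intro j
        simpa using hW1 (3 + j)
      | succ d ih =>
        intro j
        have h1 : p (j + (d+1)) * (p j)⁻¹ =
            (p ((j+1) + d) * (p (j+1))⁻¹) * (p (j+1) * (p j)⁻¹) := by
          have hjd : j + (d + 1) = (j + 1) + d := by omega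
          rw [hjd]; group
        rw [h1]
        have h2 : p (j+1) * (p j)⁻¹ = gg (j+1) := by rw [hpS j]; group
        rw [h2]
        have hmem : (p ((j+1) + d) * (p (j+1))⁻¹) * gg (j+1) ∈ W (3+j+1) * W (3+j+1) :=
          Set.mul_mem_mul (ih (j+1)) (hgW (j+1))
        exact ((Set.subset_mul_left _ (hW1 (3+j+1))).trans (hWcube (3+j))) hmem
    have hploc : ∀ m, p m ∈ W 2 := by
      intro m
      have h1 : p m = (p (0 + m) * (p 0)⁻¹) * p 0 := by rw [Nat.zero_add]; group
      rw [h1]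
      have h2 : (p (0 + m) * (p 0)⁻¹) * p 0 ∈ W 3 * W 3 := by
        refine Set.mul_mem_mul (hpdiff m 0) ?_
        rw [hp0]
        exact hgW 0
      exact ((Set.subset_mul_left _ (hW1 3)).trans (hWcube 2)) h2
    -- the sequence in Q
    set u : ℕ → MyCopy G ⧸ N := fun m => (q.comp jG) (p m) with hu
    have hCauchy : CauchySeq u := by
      rw [hQUbasis.cauchySeq_iff]
      rintro i -
      refine ⟨i, fun m hm n hn => ?_⟩
      show u n / u m ∈ q '' W i
      have hcase : ∀ m n : ℕ, i ≤ m → m ≤ n → u n / u m ∈ q '' W i := by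
        intro m n him hmn
        obtain ⟨d, rfl⟩ := Nat.exists_eq_add_of_le hmn
        have h1 : u (m+d) / u m = (q.comp jG) (p (m+d) / p m) := (map_div _ _ _).symm
        rw [h1]
        have h2 : p (m+d) / p m ∈ W (3+m) := by
          rw [div_eq_mul_inv]
          exact hpdiff d m
        exact ⟨p (m+d) / p m, hWmono i (3+m) (le_trans him (by omega)) h2, rfl⟩
      rcases le_total m n with hmn | hnm
      · exact hcase m n hm hmn
      · have h3 : u n / u m = (u m / u n)⁻¹ := by rw [inv_div]
        rw [h3, ← hqWsymm i]
        exact Set.inv_mem_inv.mpr (hcase n m hn hnm)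
    obtain ⟨xb, hxb⟩ := hSCQ u hCauchy
    have hxbcl : xb ∈ closure (q '' W 2) := by
      refine mem_closure_of_tendsto hxb (Filter.Eventually.of_forall fun m => ?_)
      exact ⟨p m, hploc m, rfl⟩
    have hxbW1 : xb ∈ q '' W 1 := by
      have h1 : closure (q '' W 2) ⊆ (q '' W 2) * (q '' W 2) :=
        my_closure_subset_mul (hqWnb 2) (hqWsymm 2)
      have h2 : (q '' W 2) * (q '' W 2) ⊆ q '' (W 2 * W 2) := by
        rintro _ ⟨_, ⟨a, ha, rfl⟩, _, ⟨b, hb, rfl⟩, rfl⟩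
        exact ⟨a * b, Set.mul_mem_mul ha hb, map_mul q a b⟩
      have h3 : q '' (W 2 * W 2) ⊆ q '' W 1 :=
        Set.image_mono ((Set.subset_mul_left _ (hW1 2)).trans (hWcube 1))
      exact h3 (h2 (h1 hxbcl))
    obtain ⟨g₀, hg₀W, hg₀q⟩ := hxbW1
    -- limits in M
    have hzt : Filter.Tendsto (fun m => zs (m+1)) Filter.atTop (𝓝 (1 : MyCopy H)) := by
      rw [hMbasis.tendsto_right_iff]
      intro i _
      refine Filter.eventually_atTop.mpr ⟨i, fun m hm => ?_⟩
      have h2 : zs (m+1) ∈ (O (3+m) : Set (MyCopy H)) := hclO (3+m) (hzscl (m+1))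
      exact hOmono i (3+m) (by omega) h2
    have hfp : Filter.Tendsto (fun m => fM (p m)) Filter.atTop (𝓝 (y : MyCopy H)) := by
      have heq : ∀ m, (zs (m+1))⁻¹ * y = fM (p m) := by
        intro m
        rw [← hyp m]
        group
      have h1 : Filter.Tendsto (fun m => (zs (m+1))⁻¹ * y) Filter.atTop
          (𝓝 ((1 : MyCopy H)⁻¹ * y)) := (hzt.inv).mul tendsto_const_nhds
      rw [inv_one, one_mul] at h1
      exact h1.congr heq
    have hφu : Filter.Tendsto (fun m => fM (p m)) Filter.atTop (𝓝 (φ xb)) := by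
      have h1 : Filter.Tendsto (fun m => φ (u m)) Filter.atTop (𝓝 (φ xb)) :=
        (hφcont.tendsto xb).comp hxb
      refine h1.congr (fun m => ?_)
      show φ ((q.comp jG) (p m)) = fM (p m)
      exact hφq (jG (p m))
    have hy' : φ xb = y := tendsto_nhds_unique hφu hfp
    have hfg : f g₀ = y := by
      have h6 : φ (q g₀) = fM' g₀ := hφq g₀
      rw [hg₀q, hy'] at h6
      exact h6.symm
    exact ⟨g₀, hWU 1 hg₀W, hfg⟩
  -- conclusion
  obtain ⟨i, -, hOi⟩ := hMbasis.mem_iff.mp (hBaire 3)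
  refine Filter.mem_of_superset ((hOopen i).mem_nhds (hO1 i)) ?_
  exact fun z hz => hkey2 (hOi hz)
end

section
/- Any continuous surjective homomorphism from a separable, complete, metrizable topological group onto a Baire topological group is open (Banach's Open Map Theorem for groups). -/
open Topology Pointwise

universe u

section AuxBanach
open Filter Set


lemma myclosure_mul {M : Type*} [TopologicalSpace M] [Mul M] [ContinuousMul M]
    (s t : Set M) : closure s * closure t ⊆ closure (s * t) := by
  have : closure s * closure t = (fun p : M × M => p.1 * p.2) '' (closure s ×ˢ closure t) := by
    rw [Set.image_mul_prod]
  rw [this, ← closure_prod_eq]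
  refine (image_closure_subset_closure_image continuous_mul).trans ?_
  rw [Set.image_mul_prod]

lemma image_inv_hom {G H : Type*} [Group G] [Group H] (f : G →* H) (V : Set G) :
    (f '' V)⁻¹ = f '' V⁻¹ := by
  ext x
  simp only [Set.mem_inv, Set.mem_image]
  constructor
  · rintro ⟨v, hv, hfv⟩
    exact ⟨v⁻¹, by simpa using hv, by rw [map_inv, hfv, inv_inv]⟩
  · rintro ⟨v, hv, rfl⟩
    exact ⟨v⁻¹, by simpa using hv, by simp [map_inv]⟩

lemma stepA {G H : Type*} [Group G] [TopologicalSpace G] [IsTopologicalGroup G]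
    [TopologicalSpace.SeparableSpace G]
    [Group H] [TopologicalSpace H] [IsTopologicalGroup H] [BaireSpace H]
    (f : G →* H) (hf : Continuous f) (hsurj : Function.Surjective f)
    {W : Set G} (hW : W ∈ 𝓝 1) : closure (f '' W) ∈ 𝓝 (1 : H) := by
  obtain ⟨V, V_mem, V_closed, V_symm, VW⟩ :
      ∃ V ∈ 𝓝 (1 : G), IsClosed V ∧ V⁻¹ = V ∧ V * V ⊆ W :=
    exists_closed_nhds_one_inv_eq_mul_subset hW
  obtain ⟨D, D_count, D_dense⟩ := TopologicalSpace.exists_countable_dense G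
  have : Nonempty H := ⟨1⟩
  have : Encodable D := D_count.toEncodable
  -- H is covered by the translates f d • closure (f '' V)
  obtain ⟨⟨d, hd⟩, hi⟩ : ∃ d : D, (interior ((f d) • closure (f '' V))).Nonempty := by
    apply nonempty_interior_of_iUnion_of_closed
    · intro d
      exact (isClosed_closure).smul _
    · apply eq_univ_iff_forall.2 (fun y => ?_)
      obtain ⟨g, rfl⟩ := hsurj y
      have hne : (interior (g • V⁻¹)).Nonempty := by
        refine ⟨g, ?_⟩
        rw [interior_smul (c := g) (s := V⁻¹)]
        refine ⟨1, mem_interior_iff_mem_nhds.2 ?_, by simp⟩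
        simpa using inv_mem_nhds_one G V_mem
      obtain ⟨d, hdD, hdV⟩ : ∃ d ∈ D, d ∈ interior (g • V⁻¹) :=
        D_dense.exists_mem_open isOpen_interior hne
      have hdV' : d ∈ g • V⁻¹ := interior_subset hdV
      obtain ⟨v, hv, hdv⟩ := hdV'
      -- d = g • v with v ∈ V⁻¹, so g = d * v⁻¹ with v⁻¹ ∈ V
      have hg : g = d * v⁻¹ := by
        rw [← hdv]; simp [smul_eq_mul]
      refine Set.mem_iUnion.2 ⟨⟨d, hdD⟩, ?_⟩
      have hmem : f v⁻¹ ∈ closure (f '' V) := by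
        refine subset_closure ⟨v⁻¹, ?_, rfl⟩
        have : v⁻¹ ∈ V⁻¹⁻¹ := Set.inv_mem_inv.2 hv
        rwa [inv_inv, ← V_symm] at this
      have := Set.smul_mem_smul_set (a := f d) hmem
      rw [smul_eq_mul, ← map_mul] at this
      rwa [hg]
  rw [interior_smul] at hi
  obtain ⟨x, hx⟩ := smul_set_nonempty.1 hi
  have hxcl : x ∈ closure (f '' V) := interior_subset hx
  have h1 : (1 : H) ∈ x⁻¹ • interior (closure (f '' V)) :=
    ⟨x, hx, by simp⟩
  have hopen : IsOpen (x⁻¹ • interior (closure (f '' V))) := isOpen_interior.smul _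
  refine Filter.mem_of_superset (hopen.mem_nhds h1) ?_
  intro z hz
  obtain ⟨w, hw, hzw⟩ := hz
  have hw' : w ∈ closure (f '' V) := interior_subset hw
  have : z = x⁻¹ * w := by rw [← hzw]; rfl
  have hxinv : x⁻¹ ∈ closure (f '' V) := by
    have : x⁻¹ ∈ (closure (f '' V))⁻¹ := by simpa using hxcl
    rwa [inv_closure, image_inv_hom, V_symm] at this
  have hz2 : z ∈ closure (f '' V) * closure (f '' V) := by
    rw [this]; exact Set.mul_mem_mul hxinv hw'
  have := myclosure_mul (f '' V) (f '' V) hz2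
  rw [← Set.image_mul f] at this
  exact closure_mono (Set.image_mono VW) this

lemma nhds_one_cg {G H : Type*} [Group G] [TopologicalSpace G] [IsTopologicalGroup G]
    [SecondCountableTopology G]
    [Group H] [TopologicalSpace H] [IsTopologicalGroup H] [BaireSpace H]
    (f : G →* H) (hf : Continuous f) (hsurj : Function.Surjective f) :
    (𝓝 (1 : H)).IsCountablyGenerated := by
  obtain ⟨b, b_count, -, b_basis⟩ := TopologicalSpace.exists_countable_basis G
  -- network property
  have network : ∀ (y : H) (U : Set H), IsOpen U → y ∈ U → ∃ S ∈ b, y ∈ f '' S ∧ f '' S ⊆ U := by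
    intro y U hU hy
    obtain ⟨g, rfl⟩ := hsurj y
    obtain ⟨S, hSb, hgS, hSsub⟩ := b_basis.exists_subset_of_mem_open
      (show g ∈ f ⁻¹' U from hy) (hU.preimage hf)
    exact ⟨S, hSb, ⟨g, hgS, rfl⟩, by
      intro z hz; obtain ⟨g', hg', rfl⟩ := hz; exact hSsub hg'⟩
  set T : Set G → Set H := fun S => interior (closure (f '' S)) with hT
  -- π-base property
  have pibase : ∀ U : Set H, IsOpen U → U.Nonempty →
      ∃ S ∈ b, (T S).Nonempty ∧ T S ⊆ U := by
    intro U hU ⟨x, hx⟩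
    obtain ⟨C, hC_mem, hC_closed, hC_sub⟩ := exists_mem_nhds_isClosed_subset (hU.mem_nhds hx)
    set V := interior C with hV
    have hxV : x ∈ V := mem_interior_iff_mem_nhds.2 hC_mem
    have hVopen : IsOpen V := isOpen_interior
    -- the dense open sets
    have : Countable ↥b := b_count.to_subtype
    set D : ↥b → Set H := fun S =>
      (closure (f '' (S : Set G)))ᶜ ∪ interior (closure (f '' (S : Set G))) with hD
    have hDo : ∀ S, IsOpen (D S) := fun S =>
      (isOpen_compl_iff.2 isClosed_closure).union isOpen_interior
    have hDd : ∀ S, Dense (D S) := by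
      intro S
      rw [dense_iff_inter_open]
      intro O hO ⟨z, hz⟩
      by_cases h : O ⊆ closure (f '' (S : Set G))
      · exact ⟨z, hz, Or.inr (interior_maximal h hO hz)⟩
      · obtain ⟨w, hwO, hw⟩ := not_subset.1 h
        exact ⟨w, hwO, Or.inl hw⟩
    have hdense : Dense (⋂ S, D S) := dense_iInter_of_isOpen hDo hDd
    obtain ⟨z, hzV, hzD⟩ : ∃ z, z ∈ V ∧ z ∈ ⋂ S, D S := by
      obtain ⟨z, hz1, hz2⟩ := dense_iff_inter_open.1 hdense V hVopen ⟨x, hxV⟩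
      exact ⟨z, hz1, hz2⟩
    obtain ⟨S, hSb, hzS, hSV⟩ := network z V hVopen hzV
    refine ⟨S, hSb, ⟨z, ?_⟩, ?_⟩
    · have := Set.mem_iInter.1 hzD ⟨S, hSb⟩
      rcases this with h | h
      · exact absurd (subset_closure hzS) h
      · exact h
    · calc T S ⊆ closure (f '' S) := interior_subset
        _ ⊆ closure V := closure_mono hSV
        _ ⊆ C := hC_closed.closure_subset_iff.2 interior_subset
        _ ⊆ U := hC_sub
  -- now build countable basis of 𝓝 1
  set ι := {S : Set G // S ∈ b ∧ (T S).Nonempty} with hι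
  have : Countable ι := (b_count.mono (fun S hS => hS.1 : {S | S ∈ b ∧ (T S).Nonempty} ⊆ b)).to_subtype
  have hbasis : (𝓝 (1 : H)).HasBasis (fun _ : ι => True)
      (fun i => T i.1 * (T i.1)⁻¹) := by
    constructor
    intro t
    constructor
    · intro ht
      obtain ⟨V, hV, hVdiv⟩ := exists_nhds_split_inv ht
      have h1V : (1 : H) ∈ interior V := mem_interior_iff_mem_nhds.2 hV
      obtain ⟨S, hSb, hTne, hTsub⟩ := pibase (interior V) isOpen_interior ⟨1, h1V⟩
      refine ⟨⟨S, hSb, hTne⟩, trivial, ?_⟩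
      rintro z ⟨a, ha, c, hc, rfl⟩
      have hc2 : c⁻¹ ∈ T S := Set.mem_inv.1 hc
      have := hVdiv a (interior_subset (hTsub ha)) c⁻¹ (interior_subset (hTsub hc2))
      simpa [div_eq_mul_inv] using this
    · rintro ⟨i, -, hsub⟩
      refine Filter.mem_of_superset ?_ hsub
      obtain ⟨w, hw⟩ := i.2.2
      have hopen : IsOpen (T i.1 * (T i.1)⁻¹) := isOpen_interior.mul_right
      have h1 : (1 : H) ∈ T i.1 * (T i.1)⁻¹ :=
        ⟨w, hw, w⁻¹, Set.inv_mem_inv.2 hw, by simp⟩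
      exact hopen.mem_nhds h1
  exact Filter.HasCountableBasis.isCountablyGenerated ⟨hbasis, Set.to_countable _⟩




end AuxBanach

set_option maxHeartbeats 2000000 in
/-- Banach's Open Map Theorem: a continuous surjective homomorphism from a
separable complete metrizable group onto a Baire group is open. -/
theorem stmt1 (G : Type u) [Group G] [TopologicalSpace G] [IsTopologicalGroup G] [T2Space G]
    [TopologicalSpace.SeparableSpace G] [TopologicalSpace.MetrizableSpace G]
    (hc : @CompleteSpace G (IsTopologicalGroup.rightUniformSpace G))
    (H : Type u) [Group H] [TopologicalSpace H] [IsTopologicalGroup H] [T2Space H]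
    [BaireSpace H]
    (f : G →* H) (hf : Continuous f) (hsurj : Function.Surjective f) :
    IsOpenMap f := by
  haveI : SecondCountableTopology G := by
    letI := TopologicalSpace.metrizableSpaceMetric G
    exact UniformSpace.secondCountable_of_separable G
  -- the key claim
  have key : ∀ U ∈ 𝓝 (1 : G), f '' U ∈ 𝓝 (1 : H) := by
    intro U hU
    haveI : (𝓝 (1 : H)).IsCountablyGenerated := nhds_one_cg f hf hsurj
    obtain ⟨W, hW⟩ := (𝓝 (1 : H)).exists_antitone_basis
    obtain ⟨B, hB⟩ := (𝓝 (1 : G)).exists_antitone_basis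
    -- construct the shrinking sequence V
    have key_ex : ∀ (n : ℕ) (S : Set G), S ∈ 𝓝 (1 : G) →
        ∃ V, (V ∈ 𝓝 (1 : G) ∧ IsClosed V ∧ V⁻¹ = V) ∧ V * V ⊆ S ∩ B n := by
      intro n S hS
      rcases exists_closed_nhds_one_inv_eq_mul_subset (Filter.inter_mem hS (hB.1.mem_of_mem trivial))
        with ⟨V, h1, h2, h3, h4⟩
      exact ⟨V, ⟨h1, h2, h3⟩, h4⟩
    obtain ⟨V₀, hV₀mem, hV₀closed, hV₀symm, hV₀U⟩ :
        ∃ V ∈ 𝓝 (1 : G), IsClosed V ∧ V⁻¹ = V ∧ V * V ⊆ U :=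
      exists_closed_nhds_one_inv_eq_mul_subset hU
    let Vaux : ℕ → {S : Set G // S ∈ 𝓝 (1 : G) ∧ IsClosed S ∧ S⁻¹ = S} :=
      Nat.rec ⟨V₀, hV₀mem, hV₀closed, hV₀symm⟩ (fun n p =>
        ⟨Classical.choose (key_ex n p.1 p.2.1),
         (Classical.choose_spec (key_ex n p.1 p.2.1)).1⟩)
    set V : ℕ → Set G := fun n => (Vaux n).1 with hV
    have hVmem : ∀ n, V n ∈ 𝓝 (1 : G) := fun n => (Vaux n).2.1
    have hVclosed : ∀ n, IsClosed (V n) := fun n => (Vaux n).2.2.1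
    have hVsymm : ∀ n, (V n)⁻¹ = V n := fun n => (Vaux n).2.2.2
    have hVone : ∀ n, (1 : G) ∈ V n := fun n => mem_of_mem_nhds (hVmem n)
    have hVmul : ∀ n, V (n + 1) * V (n + 1) ⊆ V n ∩ B n := fun n =>
      (Classical.choose_spec (key_ex n (Vaux n).1 (Vaux n).2.1)).2
    have hVsub : ∀ n, V (n + 1) ⊆ V n := fun n x hx => by
      have := (hVmul n (Set.mul_mem_mul hx (hVone (n + 1)))).1
      simpa using this
    have hVanti : ∀ m n, n ≤ m → V m ⊆ V n := by
      intro m n h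
      induction h with
      | refl => exact subset_rfl
      | step h ih => exact (hVsub _).trans ih
    have hVB : ∀ n, V (n + 1) ⊆ B n := fun n x hx => by
      have := (hVmul n (Set.mul_mem_mul hx (hVone (n + 1)))).2
      simpa using this
    have hVbasis : ∀ t ∈ 𝓝 (1 : G), ∃ n, V n ⊆ t := by
      intro t ht
      obtain ⟨n, -, hn⟩ := hB.1.mem_iff.1 ht
      exact ⟨n + 1, (hVB n).trans hn⟩
    have hV₀U' : V 0 ⊆ U := fun x hx => hV₀U (by simpa using (Set.mul_mem_mul hx (hVone 0) : x * 1 ∈ V₀ * V₀))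
    -- main claim: closure (f '' V 1) ⊆ f '' U
    have main : closure (f '' V 1) ⊆ f '' U := by
      intro y hy
      -- one-step existence
      have step_ex : ∀ (n : ℕ) (q : G), y * (f q)⁻¹ ∈ closure (f '' V (n + 1)) →
          ∃ g', g' ∈ V (n + 1) ∧
            y * (f (g' * q))⁻¹ ∈ closure (f '' V (n + 2)) ∩ W (n + 1) := by
        intro n q hq
        have hT : closure (f '' V (n + 2)) ∩ W (n + 1) ∈ 𝓝 (1 : H) :=
          Filter.inter_mem (stepA f hf hsurj (hVmem (n + 2))) (hW.1.mem_of_mem trivial)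
        set z := y * (f q)⁻¹ with hz
        set O := interior (closure (f '' V (n + 2)) ∩ W (n + 1)) with hO
        have hOopen : IsOpen O := isOpen_interior
        have hO1 : (1 : H) ∈ O := mem_interior_iff_mem_nhds.2 hT
        set N := (fun h : H => z * h⁻¹) ⁻¹' O with hN
        have hNopen : IsOpen N := hOopen.preimage (by continuity)
        have hNz : z ∈ N := by
          simp only [N, Set.mem_preimage, mul_inv_cancel]
          exact hO1
        obtain ⟨h, hhN, hhf⟩ := _root_.mem_closure_iff.1 hq N hNopen hNz
        obtain ⟨g', hg', rfl⟩ := hhf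
        refine ⟨g', hg', ?_⟩
        have : z * (f g')⁻¹ ∈ O := hhN
        have heq : y * (f (g' * q))⁻¹ = z * (f g')⁻¹ := by
          rw [hz, map_mul, mul_inv_rev, ← mul_assoc]
        rw [heq]
        exact interior_subset this
      -- build the sequence
      let Qa : (n : ℕ) → {q : G // y * (f q)⁻¹ ∈ closure (f '' V (n + 1))} :=
        Nat.rec ⟨1, by simpa using hy⟩ (fun n p =>
          ⟨Classical.choose (step_ex n p.1 p.2) * p.1,
           (Classical.choose_spec (step_ex n p.1 p.2)).2.1⟩)
      set q : ℕ → G := fun n => (Qa n).1 with hqdef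
      have hgmem : ∀ n, Classical.choose (step_ex n (Qa n).1 (Qa n).2) ∈ V (n + 1) :=
        fun n => (Classical.choose_spec (step_ex n (Qa n).1 (Qa n).2)).1
      have hqsucc : ∀ n, q (n + 1) = Classical.choose (step_ex n (Qa n).1 (Qa n).2) * q n :=
        fun n => rfl
      have hzW : ∀ n, y * (f (q (n + 1)))⁻¹ ∈ W (n + 1) :=
        fun n => ((Classical.choose_spec (step_ex n (Qa n).1 (Qa n).2)).2).2
      have hq0 : q 0 = 1 := rfl
      -- difference estimates
      have key2 : ∀ (k n : ℕ), q (n + k + 1) * (q n)⁻¹ ∈ V (n + 1) * V (n + 1) := by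
        intro k
        induction k with
        | zero =>
          intro n
          have heq : q (n + 1) * (q n)⁻¹ = Classical.choose (step_ex n (Qa n).1 (Qa n).2) := by
            rw [hqsucc n, mul_inv_cancel_right]
          rw [show n + 0 + 1 = n + 1 from rfl, heq]
          have := Set.mul_mem_mul (hgmem n) (hVone (n + 1))
          simpa using this
        | succ k ih =>
          intro n
          have hgn : q (n + 1) * (q n)⁻¹ ∈ V (n + 1) := by
            have heq : q (n + 1) * (q n)⁻¹ = Classical.choose (step_ex n (Qa n).1 (Qa n).2) := by
              rw [hqsucc n, mul_inv_cancel_right]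
            rw [heq]; exact hgmem n
          have h2 := ih (n + 1)
          have h3 : q ((n + 1) + k + 1) * (q (n + 1))⁻¹ ∈ V (n + 1) := ((hVmul (n + 1)) h2).1
          have h1 : q (n + (k + 1) + 1) * (q n)⁻¹ =
              (q ((n + 1) + k + 1) * (q (n + 1))⁻¹) * (q (n + 1) * (q n)⁻¹) := by
            have he : n + (k + 1) + 1 = (n + 1) + k + 1 := by omega
            rw [he]; simp [mul_assoc]
          rw [h1]
          exact Set.mul_mem_mul h3 hgn
      have key3 : ∀ m n, n < m → q m * (q n)⁻¹ ∈ V n := by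
        intro m n hnm
        obtain ⟨k, rfl⟩ : ∃ k, m = n + k + 1 := ⟨m - n - 1, by omega⟩
        exact ((hVmul n) (key2 k n)).1
      -- Cauchy and limit
      obtain ⟨g, hgtend⟩ : ∃ g : G, Filter.Tendsto q Filter.atTop (𝓝 g) := by
        letI : UniformSpace G := IsTopologicalGroup.rightUniformSpace G
        haveI : CompleteSpace G := hc
        have hcauchy : CauchySeq q := by
          constructor
          · exact Filter.map_neBot
          · rw [Filter.prod_map_map_eq, uniformity_eq_comap_nhds_one' G,
              ← Filter.map_le_iff_le_comap, Filter.map_map]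
            rw [Filter.le_def]
            intro t ht
            obtain ⟨n₀, hn₀⟩ := hVbasis t ht
            rw [Filter.mem_map]
            have hev : {p : ℕ × ℕ | n₀ ≤ p.1 ∧ n₀ ≤ p.2} ∈
                (Filter.atTop ×ˢ Filter.atTop : Filter (ℕ × ℕ)) :=
              Filter.prod_mem_prod (Filter.eventually_ge_atTop n₀) (Filter.eventually_ge_atTop n₀)
            refine Filter.mem_of_superset hev ?_
            rintro ⟨m, n⟩ ⟨hm, hn⟩
            show q n * (q m)⁻¹ ∈ t
            rw [← div_eq_mul_inv]
            rcases lt_trichotomy m n with h | h | h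
            · refine hn₀ (hVanti m n₀ hm ?_)
              rw [div_eq_mul_inv]
              exact key3 n m h
            · subst h
              simpa using hn₀ (hVone n₀)
            · have h1 : q m * (q n)⁻¹ ∈ V n₀ := hVanti n n₀ hn (key3 m n h)
              have h2 : (q m * (q n)⁻¹)⁻¹ ∈ (V n₀)⁻¹ := Set.inv_mem_inv.2 h1
              rw [hVsymm n₀] at h2
              refine hn₀ ?_
              rw [div_eq_mul_inv]
              simpa [mul_inv_rev] using h2
        exact cauchySeq_tendsto_of_complete hcauchy
      -- g lies in V 0 hence in U
      have hgV0 : g ∈ V 0 := by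
        have hev : ∀ᶠ n in Filter.atTop, q n ∈ V 0 := by
          filter_upwards [Filter.eventually_ge_atTop 1] with n hn
          obtain ⟨k, rfl⟩ : ∃ k, n = 0 + k + 1 := ⟨n - 1, by omega⟩
          have h := ((hVmul 0) (key2 k 0)).1
          rw [hq0] at h
          simpa using h
        exact (hVclosed 0).mem_of_tendsto hgtend hev
      -- f (q n) tends to y
      have hztend : Filter.Tendsto (fun n => y * (f (q n))⁻¹) Filter.atTop (𝓝 (1 : H)) := by
        rw [hW.1.tendsto_right_iff]
        intro i _
        filter_upwards [Filter.eventually_ge_atTop (i + 1)] with n hn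
        obtain ⟨k, rfl⟩ : ∃ k, n = k + 1 := ⟨n - 1, by omega⟩
        exact hW.2 (show i ≤ k + 1 by omega) (hzW k)
      have hfq : Filter.Tendsto (fun n => f (q n)) Filter.atTop (𝓝 y) := by
        have h1 : Filter.Tendsto (fun n => (y * (f (q n))⁻¹)⁻¹ * y) Filter.atTop
            (𝓝 ((1 : H)⁻¹ * y)) := (hztend.inv).mul_const y
        simp only [mul_inv_rev, inv_inv, inv_one, one_mul] at h1
        simpa [mul_assoc] using h1
      have hfg : Filter.Tendsto (fun n => f (q n)) Filter.atTop (𝓝 (f g)) :=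
        (hf.tendsto g).comp hgtend
      exact ⟨g, hV₀U' hgV0, tendsto_nhds_unique hfg hfq⟩
    exact Filter.mem_of_superset (stepA f hf hsurj (hVmem 1)) main
  -- conclude openness
  intro A hA
  rw [isOpen_iff_mem_nhds]
  rintro y ⟨x, hxA, rfl⟩
  have h1 : x⁻¹ • A ∈ 𝓝 (1 : G) := by
    refine (hA.smul x⁻¹).mem_nhds ?_
    exact ⟨x, hxA, by simp⟩
  have h2 := key _ h1
  have h3 := (Homeomorph.mulLeft (f x)).isOpenMap.image_mem_nhds h2
  have himg : (Homeomorph.mulLeft (f x)) '' (f '' (x⁻¹ • A)) = f '' A := by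
    ext z
    constructor
    · rintro ⟨w, ⟨a, ⟨a', ha', rfl⟩, rfl⟩, rfl⟩
      refine ⟨a', ha', ?_⟩
      simp [smul_eq_mul, map_mul, map_inv, mul_assoc]
    · rintro ⟨a, ha, rfl⟩
      refine ⟨f (x⁻¹ * a), ⟨x⁻¹ * a, ⟨a, ha, rfl⟩, rfl⟩, ?_⟩
      simp [map_mul, map_inv, ← mul_assoc]
  rw [himg] at h3
  simpa using h3
end

section
/- A topological group G is τ-precompact (for an infinite cardinal τ) if and only if G is topologically isomorphic to a subgroup of a direct product of topological groups each of weight at most τ (Guran's Embedding Theorem). -/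
open Topology Pointwise

universe u

/-- `G` is τ-precompact. -/
def TauPrecompact (G : Type u) [Group G] [TopologicalSpace G] [IsTopologicalGroup G]
    (τ : Cardinal.{u}) : Prop :=
  ∀ U ∈ 𝓝 (1 : G), ∃ F : Set G, Cardinal.mk F ≤ τ ∧ U * F = Set.univ

section GuranAux
open Set Filter TopologicalSpace Function


section Machinery
variable {G : Type u} [Group G] [TopologicalSpace G] [IsTopologicalGroup G]

lemma exists_symm_sq {V : Set G} (hV : V ∈ 𝓝 1) :
    ∃ W, W ∈ 𝓝 (1:G) ∧ W ⊆ V ∧ W⁻¹ = W ∧ W * W ⊆ V := by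
  obtain ⟨V', hV', hsplit⟩ := exists_nhds_split_inv hV
  have hAmem : V' ∩ V ∈ 𝓝 (1:G) := inter_mem hV' hV
  refine ⟨(V' ∩ V) ∩ (V' ∩ V)⁻¹, inter_mem hAmem (inv_mem_nhds_one G hAmem),
    fun x hx => hx.1.2, by ext x; simp [And.comm], ?_⟩
  rintro x ⟨a, ha, b, hb, rfl⟩
  have := hsplit a ha.1.1 b⁻¹ hb.2.1
  simpa [div_eq_mul_inv] using this

open scoped Classical in
noncomputable def SqN (V : Set G) : Set G :=
  if h : V ∈ 𝓝 (1:G) then (exists_symm_sq h).choose else Set.univ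

variable {V : Set G}

lemma SqN_spec (hV : V ∈ 𝓝 (1:G)) :
    SqN V ∈ 𝓝 (1:G) ∧ SqN V ⊆ V ∧ (SqN V)⁻¹ = SqN V ∧ SqN V * SqN V ⊆ V := by
  classical
  rw [SqN]
  rw [dif_pos hV]
  exact (exists_symm_sq hV).choose_spec

lemma SqN_mem (hV : V ∈ 𝓝 (1:G)) : SqN V ∈ 𝓝 (1:G) := (SqN_spec hV).1
lemma SqN_subset (hV : V ∈ 𝓝 (1:G)) : SqN V ⊆ V := (SqN_spec hV).2.1
lemma SqN_inv (hV : V ∈ 𝓝 (1:G)) : (SqN V)⁻¹ = SqN V := (SqN_spec hV).2.2.1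
lemma SqN_mul (hV : V ∈ 𝓝 (1:G)) : SqN V * SqN V ⊆ V := (SqN_spec hV).2.2.2

noncomputable def SyN (V : Set G) : Set G := SqN (SqN V)

lemma SyN_mem (hV : V ∈ 𝓝 (1:G)) : SyN V ∈ 𝓝 (1:G) := SqN_mem (SqN_mem hV)
lemma SyN_subset (hV : V ∈ 𝓝 (1:G)) : SyN V ⊆ V :=
  (SqN_subset (SqN_mem hV)).trans (SqN_subset hV)
lemma SyN_inv (hV : V ∈ 𝓝 (1:G)) : (SyN V)⁻¹ = SyN V := SqN_inv (SqN_mem hV)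
lemma SyN_cube (hV : V ∈ 𝓝 (1:G)) : SyN V * SyN V * SyN V ⊆ V := by
  have h1 : SyN V * SyN V ⊆ SqN V := SqN_mul (SqN_mem hV)
  have h2 : SyN V ⊆ SqN V := SqN_subset (SqN_mem hV)
  exact (mul_subset_mul h1 h2).trans (SqN_mul hV)

variable (τ : Cardinal.{u})

open scoped Classical in
noncomputable def FamN (hp : TauPrecompact G τ) (V : Set G) : Set G :=
  if h : SyN V ∈ 𝓝 (1:G) then (hp _ h).choose else Set.univ

lemma FamN_card (hp : TauPrecompact G τ) (hV : V ∈ 𝓝 (1:G)) :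
    Cardinal.mk (FamN τ hp V) ≤ τ := by
  classical
  rw [FamN, dif_pos (SyN_mem hV)]; exact (hp _ (SyN_mem hV)).choose_spec.1

lemma FamN_cov (hp : TauPrecompact G τ) (hV : V ∈ 𝓝 (1:G)) :
    SyN V * FamN τ hp V = Set.univ := by
  classical
  rw [FamN, dif_pos (SyN_mem hV)]; exact (hp _ (SyN_mem hV)).choose_spec.2

def WfN (V : Set G) (f : G) : Set G := V ∩ ((fun x => f * x * f⁻¹) ⁻¹' (SyN V))

lemma WfN_mem (hV : V ∈ 𝓝 (1:G)) (f : G) : WfN V f ∈ 𝓝 (1:G) := by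
  refine inter_mem hV ?_
  have hc : Continuous (fun x : G => f * x * f⁻¹) :=
    (continuous_const.mul continuous_id).mul continuous_const
  have h1 : f * (1:G) * f⁻¹ = 1 := by group
  have h2 := hc.continuousAt (x := (1:G))
  rw [ContinuousAt] at h2
  rw [h1] at h2
  exact h2 (SyN_mem hV)

lemma WfN_subset (f : G) : WfN V f ⊆ V := inter_subset_left
lemma WfN_conj {f x : G} (hx : x ∈ WfN V f) : f * x * f⁻¹ ∈ SyN V := hx.2

noncomputable def USn (hp : TauPrecompact G τ) (U : Set G) : ℕ → Set (Set G)
  | 0 => {SqN U}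
  | n+1 => USn hp U n ∪ SqN '' USn hp U n ∪ SyN '' USn hp U n
      ∪ (⋃ V₁ ∈ USn hp U n, (fun V₂ => SqN (V₁ ∩ V₂)) '' USn hp U n)
      ∪ ⋃ V ∈ USn hp U n, WfN V '' (FamN τ hp V)

noncomputable def UUb (hp : TauPrecompact G τ) (U : Set G) : Set (Set G) :=
  ⋃ n : ULift.{u} ℕ, USn τ hp U n.down

variable {τ} {hp : TauPrecompact G τ} {U : Set G}

lemma USn_nhds (hU : U ∈ 𝓝 (1:G)) : ∀ n, ∀ V ∈ USn τ hp U n, V ∈ 𝓝 (1:G) := by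
  intro n
  induction n with
  | zero => intro V hV; rw [USn, mem_singleton_iff] at hV; subst hV; exact SqN_mem hU
  | succ n ih =>
    intro V hV
    rcases hV with ((((h | h) | h) | h) | h)
    · exact ih V h
    · obtain ⟨W, hW, rfl⟩ := h; exact SqN_mem (ih W hW)
    · obtain ⟨W, hW, rfl⟩ := h; exact SyN_mem (ih W hW)
    · simp only [mem_iUnion, mem_image] at h
      obtain ⟨V₁, hV₁, V₂, hV₂, rfl⟩ := h
      exact SqN_mem (inter_mem (ih _ hV₁) (ih _ hV₂))
    · simp only [mem_iUnion, mem_image] at h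
      obtain ⟨W, hW, f, hf, rfl⟩ := h
      exact WfN_mem (ih W hW) f

lemma UUb_nhds (hU : U ∈ 𝓝 (1:G)) {V : Set G} (hV : V ∈ UUb τ hp U) : V ∈ 𝓝 (1:G) := by
  obtain ⟨n, hn⟩ := mem_iUnion.1 hV
  exact USn_nhds hU _ _ hn

lemma USn_succ_subset (n : ℕ) : USn τ hp U n ⊆ USn τ hp U (n+1) := fun V hV =>
  Or.inl (Or.inl (Or.inl (Or.inl hV)))

lemma USn_mono {m n : ℕ} (h : m ≤ n) : USn τ hp U m ⊆ USn τ hp U n := by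
  induction h with
  | refl => exact subset_rfl
  | step _ ih => exact ih.trans (USn_succ_subset _)

lemma UUb_seed : SqN U ∈ UUb τ hp U :=
  mem_iUnion.2 ⟨⟨0⟩, mem_singleton _⟩

lemma UUb_SqN {V : Set G} (hV : V ∈ UUb τ hp U) : SqN V ∈ UUb τ hp U := by
  obtain ⟨n, hn⟩ := mem_iUnion.1 hV
  exact mem_iUnion.2 ⟨⟨n.down + 1⟩, Or.inl (Or.inl (Or.inl (Or.inr ⟨V, hn, rfl⟩)))⟩

lemma UUb_SyN {V : Set G} (hV : V ∈ UUb τ hp U) : SyN V ∈ UUb τ hp U := by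
  obtain ⟨n, hn⟩ := mem_iUnion.1 hV
  exact mem_iUnion.2 ⟨⟨n.down + 1⟩, Or.inl (Or.inl (Or.inr ⟨V, hn, rfl⟩))⟩

lemma UUb_inter {V₁ V₂ : Set G} (h1 : V₁ ∈ UUb τ hp U) (h2 : V₂ ∈ UUb τ hp U) :
    SqN (V₁ ∩ V₂) ∈ UUb τ hp U := by
  obtain ⟨n, hn⟩ := mem_iUnion.1 h1
  obtain ⟨m, hm⟩ := mem_iUnion.1 h2
  have hn' : V₁ ∈ USn τ hp U (max n.down m.down) := USn_mono (le_max_left _ _) hn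
  have hm' : V₂ ∈ USn τ hp U (max n.down m.down) := USn_mono (le_max_right _ _) hm
  refine mem_iUnion.2 ⟨⟨max n.down m.down + 1⟩, Or.inl (Or.inr ?_)⟩
  simp only [mem_iUnion, mem_image]
  exact ⟨V₁, hn', V₂, hm', rfl⟩

lemma UUb_WfN {V : Set G} {f : G} (hV : V ∈ UUb τ hp U) (hf : f ∈ FamN τ hp V) :
    WfN V f ∈ UUb τ hp U := by
  obtain ⟨n, hn⟩ := mem_iUnion.1 hV
  refine mem_iUnion.2 ⟨⟨n.down + 1⟩, Or.inr ?_⟩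
  simp only [mem_iUnion, mem_image]
  exact ⟨V, hn, f, hf, rfl⟩

lemma USn_card (hτ : Cardinal.aleph0 ≤ τ) (hU : U ∈ 𝓝 (1:G)) :
    ∀ n, Cardinal.mk (USn τ hp U n) ≤ τ := by
  have hadd : ∀ a b : Cardinal.{u}, a ≤ τ → b ≤ τ → a + b ≤ τ := fun a b ha hb =>
    Cardinal.add_le_of_le hτ ha hb
  have hmul : ∀ a b : Cardinal.{u}, a ≤ τ → b ≤ τ → a * b ≤ τ := fun a b ha hb =>
    (mul_le_mul' ha hb).trans (le_of_eq (Cardinal.mul_eq_self hτ))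
  intro n
  induction n with
  | zero =>
    rw [USn]
    rw [Cardinal.mk_singleton]
    exact le_trans Cardinal.one_lt_aleph0.le hτ
  | succ n ih =>
    rw [USn]
    refine le_trans (Cardinal.mk_union_le _ _) (hadd _ _ (le_trans (Cardinal.mk_union_le _ _)
      (hadd _ _ (le_trans (Cardinal.mk_union_le _ _) (hadd _ _ (le_trans
        (Cardinal.mk_union_le _ _) (hadd _ _ ih (Cardinal.mk_image_le.trans ih)))
        (Cardinal.mk_image_le.trans ih))) ?_)) ?_)
    · refine le_trans (Cardinal.mk_biUnion_le _ _) (hmul _ _ ih (ciSup_le' fun V => ?_))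
      exact Cardinal.mk_image_le.trans ih
    · refine le_trans (Cardinal.mk_biUnion_le _ _) (hmul _ _ ih (ciSup_le' fun V => ?_))
      exact Cardinal.mk_image_le.trans (FamN_card τ hp (USn_nhds hU n _ V.2))
end Machinery



lemma isTopologicalBasis_image {X Y : Type*} [TopologicalSpace X] [TopologicalSpace Y]
    {f : X → Y} (hc : Continuous f) (ho : IsOpenMap f) (hs : Function.Surjective f)
    {B : Set (Set X)} (hB : IsTopologicalBasis B) :
    IsTopologicalBasis ((fun s => f '' s) '' B) := by
  refine isTopologicalBasis_of_isOpen_of_nhds ?_ ?_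
  · rintro u ⟨s, hs', rfl⟩
    exact ho s (hB.isOpen hs')
  · intro y W hyW hW
    obtain ⟨x, rfl⟩ := hs y
    obtain ⟨b, hbB, hxb, hbW⟩ := hB.exists_subset_of_mem_open
      (show x ∈ f ⁻¹' W from hyW) (hW.preimage hc)
    exact ⟨f '' b, ⟨b, hbB, rfl⟩, ⟨x, hxb, rfl⟩, by rintro _ ⟨z, hz, rfl⟩; exact hbW hz⟩

theorem abstract_key {K : Type u} [Group K] (B : GroupFilterBasis K) (τ : Cardinal.{u})
    (hτ : Cardinal.aleph0 ≤ τ)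
    (hcard : Cardinal.mk {V : Set K // V ∈ B} ≤ τ)
    (hsym : ∀ V ∈ B, ∃ W ∈ B, W ⊆ V ∧ W⁻¹ = W ∧ W * W * W ⊆ V)
    (hcov : ∀ V, V ∈ B → ∃ F : Set K, Cardinal.mk F ≤ τ ∧ V * F = Set.univ) :
    ∃ (H : Type u) (_ : Group H) (_ : TopologicalSpace H) (_ : IsTopologicalGroup H)
      (_ : T2Space H),
      (∃ Bs : Set (Set H), IsTopologicalBasis Bs ∧ Cardinal.mk Bs ≤ τ) ∧
      ∃ φ : K →* H, @Continuous K H B.topology _ φ ∧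
        ∀ V ∈ B, ∃ W ∈ 𝓝 (1 : H), φ ⁻¹' W ⊆ V := by
  classical
  letI tK : TopologicalSpace K := B.topology
  haveI hTG : IsTopologicalGroup K := B.isTopologicalGroup
  choose s hsB hssub hssym hscube using hsym
  choose Fv hFc hFcov using hcov
  set S1 : {V : Set K // V ∈ B} → Set K := fun V => s V.1 V.2 with hS1
  have hS1B : ∀ V, S1 V ∈ B := fun V => hsB V.1 V.2
  set S2 : {V : Set K // V ∈ B} → Set K := fun V => s (S1 V) (hS1B V) with hS2
  have hS2B : ∀ V, S2 V ∈ B := fun V => hsB _ _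
  set Fa : {V : Set K // V ∈ B} → Set K := fun V => Fv (S2 V) (hS2B V) with hFa
  have hFacov : ∀ V, S2 V * Fa V = Set.univ := fun V => hFcov _ _
  have hFacard : ∀ V, Cardinal.mk (Fa V) ≤ τ := fun V => hFc _ _
  set BE : {V : Set K // V ∈ B} → K → Set K :=
    fun V f => interior ((fun y => f⁻¹ * y) '' (S1 V * S1 V)) with hBE
  set BK : Set (Set K) := ⋃ V : {V : Set K // V ∈ B}, (fun f => BE V f) '' (Fa V) with hBK
  have hBKbasis : IsTopologicalBasis BK := by
    refine isTopologicalBasis_of_isOpen_of_nhds ?_ ?_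
    · intro u hu
      simp only [hBK, mem_iUnion, mem_image] at hu
      obtain ⟨V, f, -, rfl⟩ := hu
      exact isOpen_interior
    · intro x O hxO hO
      obtain ⟨V, hVB, hVO⟩ := (B.nhds_hasBasis x).mem_iff.1 (hO.mem_nhds hxO)
      set V' : {V : Set K // V ∈ B} := ⟨V, hVB⟩
      have hx' : x⁻¹ ∈ S2 V' * Fa V' := by rw [hFacov]; trivial
      obtain ⟨w, hw, f, hf, hwf⟩ := Set.mem_mul.1 hx'
      have hfinv : f⁻¹ = x * w := by
        have hfeq : f = w⁻¹ * x⁻¹ := by rw [← hwf]; group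
        rw [hfeq]; group
      have hS2sym : (S2 V')⁻¹ = S2 V' := hssym _ _
      have hwinv : w⁻¹ ∈ S2 V' := by
        rw [← hS2sym]
        exact inv_mem_inv.2 hw
      refine ⟨BE V' f, ?_, ?_, ?_⟩
      · exact mem_iUnion.2 ⟨V', ⟨f, hf, rfl⟩⟩
      · rw [hBE, mem_interior_iff_mem_nhds]
        refine (B.nhds_hasBasis x).mem_iff.2 ⟨S2 V', hS2B V', ?_⟩
        rintro _ ⟨v, hv, rfl⟩
        refine ⟨w⁻¹ * v, mul_mem_mul (hssub _ _ hwinv) (hssub _ _ hv), ?_⟩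
        rw [hfinv]; group
      · refine interior_subset.trans ?_
        rintro _ ⟨p, hp, rfl⟩
        have hwp : w * p ∈ V := by
          have h1 : w * p ∈ S1 V' * (S1 V' * S1 V') :=
            mul_mem_mul (hssub _ _ hw) hp
          have h2 : S1 V' * (S1 V' * S1 V') = S1 V' * S1 V' * S1 V' := (mul_assoc _ _ _).symm
          exact hscube V hVB (h2 ▸ h1)
        refine hVO ⟨w * p, hwp, ?_⟩
        rw [hfinv]; group
  have hBKcard : Cardinal.mk BK ≤ τ := by
    have h1 : Cardinal.mk BK ≤
        Cardinal.mk {V : Set K // V ∈ B} * ⨆ V : {V : Set K // V ∈ B},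
          Cardinal.mk ((fun f => BE V f) '' (Fa V)) := Cardinal.mk_iUnion_le _
    have h2 : (⨆ V : {V : Set K // V ∈ B},
        Cardinal.mk ((fun f => BE V f) '' (Fa V))) ≤ τ :=
      ciSup_le' fun V => Cardinal.mk_image_le.trans (hFacard V)
    calc Cardinal.mk BK ≤ _ := h1
      _ ≤ τ * τ := mul_le_mul' hcard h2
      _ = τ := Cardinal.mul_eq_self hτ
  refine ⟨SeparationQuotient K, inferInstance, inferInstance, ⟨⟩, inferInstance, ?_, ?_⟩
  · refine ⟨(fun s => SeparationQuotient.mk '' s) '' BK, ?_, Cardinal.mk_image_le.trans hBKcard⟩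
    exact isTopologicalBasis_image SeparationQuotient.continuous_mk
      SeparationQuotient.isOpenMap_mk SeparationQuotient.surjective_mk hBKbasis
  · refine ⟨SeparationQuotient.mkMonoidHom, SeparationQuotient.continuous_mk, ?_⟩
    intro V hV
    have h1V : (1 : K) ∈ interior V :=
      mem_interior_iff_mem_nhds.2 (B.mem_nhds_one hV)
    refine ⟨SeparationQuotient.mk '' interior V, ?_, ?_⟩
    · refine (SeparationQuotient.isOpenMap_mk _ isOpen_interior).mem_nhds ?_
      rw [← SeparationQuotient.mk_one]
      exact mem_image_of_mem _ h1V
    · show SeparationQuotient.mk ⁻¹' _ ⊆ V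
      rw [SeparationQuotient.preimage_image_mk_open isOpen_interior]
      exact interior_subset

-- continuation: assumes f.lean content + abstract_key (e.lean) present
section KeyLemma
variable {G : Type u} [Group G] [TopologicalSpace G] [IsTopologicalGroup G]
variable {τ : Cardinal.{u}} {U : Set G}

lemma UUb_card {hp : TauPrecompact G τ} (hτ : Cardinal.aleph0 ≤ τ) (hU : U ∈ 𝓝 (1:G)) :
    Cardinal.mk (UUb τ hp U) ≤ τ := by
  rw [UUb]
  refine (Cardinal.mk_iUnion_le _).trans ?_
  have h1 : Cardinal.mk (ULift.{u} ℕ) ≤ τ := by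
    rw [Cardinal.mk_uLift, Cardinal.mk_nat, Cardinal.lift_aleph0]
    exact hτ
  have h2 : ⨆ n : ULift.{u} ℕ, Cardinal.mk (USn τ hp U n.down) ≤ τ :=
    ciSup_le' fun n => USn_card hτ hU n.down
  exact (mul_le_mul' h1 h2).trans (le_of_eq (Cardinal.mul_eq_self hτ))

noncomputable def UUbasis (τ : Cardinal.{u}) (hp : TauPrecompact G τ) (hU : U ∈ 𝓝 (1:G)) :
    GroupFilterBasis G where
  sets := UUb τ hp U
  nonempty := ⟨SqN U, UUb_seed⟩
  inter_sets := by
    intro V₁ V₂ h1 h2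
    exact ⟨SqN (V₁ ∩ V₂), UUb_inter h1 h2,
      SqN_subset (inter_mem (UUb_nhds hU h1) (UUb_nhds hU h2))⟩
  one' := by
    intro V hV
    exact mem_of_mem_nhds (UUb_nhds hU hV)
  mul' := by
    intro V hV
    exact ⟨SqN V, UUb_SqN hV, SqN_mul (UUb_nhds hU hV)⟩
  inv' := by
    intro V hV
    refine ⟨SqN V, UUb_SqN hV, fun x hx => ?_⟩
    show x⁻¹ ∈ V
    refine SqN_subset (UUb_nhds hU hV) ?_
    rw [← SqN_inv (UUb_nhds hU hV)]
    exact inv_mem_inv.2 hx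
  conj' := by
    intro x₀ V hV
    have hVn : V ∈ 𝓝 (1:G) := UUb_nhds hU hV
    have hx : x₀ ∈ SyN V * FamN τ hp V := by
      rw [FamN_cov τ hp hVn]; exact Set.mem_univ _
    obtain ⟨w, hw, f, hf, hwf⟩ := Set.mem_mul.1 hx
    refine ⟨WfN V f, UUb_WfN hV hf, fun x hx' => ?_⟩
    show x₀ * x * x₀⁻¹ ∈ V
    have h1 : f * x * f⁻¹ ∈ SyN V := WfN_conj hx'
    have hw' : w⁻¹ ∈ SyN V := by rw [← SyN_inv hVn]; exact inv_mem_inv.2 hw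
    have h2 : w * (f * x * f⁻¹) * w⁻¹ ∈ V :=
      SyN_cube hVn (mul_mem_mul (mul_mem_mul hw h1) hw')
    have heq : x₀ * x * x₀⁻¹ = w * (f * x * f⁻¹) * w⁻¹ := by rw [← hwf]; group
    rw [heq]; exact h2

lemma mem_UUbasis {hp : TauPrecompact G τ} {hU : U ∈ 𝓝 (1:G)} {V : Set G} :
    V ∈ UUbasis τ hp hU ↔ V ∈ UUb τ hp U := Iff.rfl

theorem guran_key (hτ : Cardinal.aleph0 ≤ τ) (hp : TauPrecompact G τ) (hU : U ∈ 𝓝 (1:G)) :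
    ∃ (H : Type u) (_ : Group H) (_ : TopologicalSpace H) (_ : IsTopologicalGroup H)
      (_ : T2Space H),
      (∃ Bs : Set (Set H), IsTopologicalBasis Bs ∧ Cardinal.mk Bs ≤ τ) ∧
      ∃ φ : G →* H, Continuous φ ∧ ∃ W ∈ 𝓝 (1 : H), φ ⁻¹' W ⊆ U := by
  classical
  set B : GroupFilterBasis G := UUbasis τ hp hU with hB
  have hsymB : ∀ V ∈ B, ∃ W ∈ B, W ⊆ V ∧ W⁻¹ = W ∧ W * W * W ⊆ V := by
    intro V hV
    have hVn : V ∈ 𝓝 (1:G) := UUb_nhds hU hV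
    exact ⟨SyN V, UUb_SyN hV, SyN_subset hVn, SyN_inv hVn, SyN_cube hVn⟩
  have hcovB : ∀ V, V ∈ B → ∃ F : Set G, Cardinal.mk F ≤ τ ∧ V * F = Set.univ :=
    fun V hV => hp V (UUb_nhds hU hV)
  have hcardB : Cardinal.mk {V : Set G // V ∈ B} ≤ τ := UUb_card hτ hU
  obtain ⟨H, i1, i2, i3, i4, hbasis, φ, hφc, hφV⟩ := abstract_key B τ hτ hcardB hsymB hcovB
  refine ⟨H, i1, i2, i3, i4, hbasis, φ, ?_, ?_⟩
  · have hle : (inferInstance : TopologicalSpace G) ≤ B.topology := by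
      refine le_of_nhds_le_nhds fun x => ?_
      refine (B.nhds_hasBasis x).ge_iff.2 fun V hV => ?_
      have hVn : V ∈ 𝓝 (1:G) := UUb_nhds hU hV
      rw [← map_mul_left_nhds_one x]
      exact image_mem_map hVn
    have hid : Continuous[_, B.topology] (id : G → G) := continuous_id_of_le hle
    exact @Continuous.comp G G H _ B.topology _ id (⇑φ) hφc hid
  · obtain ⟨W, hW, hsub⟩ := hφV (SqN U) UUb_seed
    exact ⟨W, hW, hsub.trans (SqN_subset hU)⟩
end KeyLemma

section Aux2
variable {G : Type u} [Group G] [TopologicalSpace G] [IsTopologicalGroup G]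
lemma tauPrecompact_of_dense {τ : Cardinal.{u}} {D : Set G} (hD : Dense D)
    (hcard : Cardinal.mk D ≤ τ) : TauPrecompact G τ := by
  intro U hU
  obtain ⟨W, hWnhds, hWU, hWsymm, -⟩ := exists_symm_sq hU
  refine ⟨D, hcard, eq_univ_of_forall fun g => ?_⟩
  have hWg : (fun x => x * g) '' W ∈ 𝓝 g := by
    rw [← map_mul_right_nhds_one g]
    exact image_mem_map hWnhds
  obtain ⟨d, hd, hdD⟩ := mem_closure_iff_nhds.1 (hD g) _ hWg
  obtain ⟨w, hw, rfl⟩ := hd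
  refine ⟨w⁻¹, hWU ?_, w * g, hdD, by group⟩
  rw [← hWsymm]; exact inv_mem_inv.2 hw

lemma exists_dense_of_basis {X : Type u} [TopologicalSpace X] {B : Set (Set X)}
    (hB : IsTopologicalBasis B) : ∃ D : Set X, Dense D ∧ Cardinal.mk D ≤ Cardinal.mk B := by
  classical
  set S : Set (Set X) := {b ∈ B | b.Nonempty} with hS
  refine ⟨Set.range (fun b : S => b.2.2.choose), ?_, ?_⟩
  · rw [dense_iff_inter_open]
    rintro U hU ⟨x, hx⟩
    obtain ⟨b, hbB, hxb, hbU⟩ := hB.exists_subset_of_mem_open hx hU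
    refine ⟨(⟨b, hbB, ⟨x, hxb⟩⟩ : S).2.2.choose, hbU ?_, Set.mem_range_self _⟩
    exact (⟨b, hbB, ⟨x, hxb⟩⟩ : S).2.2.choose_spec
  · calc Cardinal.mk _ ≤ Cardinal.mk S := Cardinal.mk_range_le
    _ ≤ Cardinal.mk B := Cardinal.mk_le_mk_of_subset (fun b hb => hb.1)




end Aux2
lemma tauPrecompact_pi {ι : Type u} (H : ι → Type u) [∀ i, Group (H i)]
    [∀ i, TopologicalSpace (H i)] [∀ i, IsTopologicalGroup (H i)] {τ : Cardinal.{u}}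
    (hτ : Cardinal.aleph0 ≤ τ) (h : ∀ i, TauPrecompact (H i) τ) :
    TauPrecompact (∀ i, H i) τ := by
  classical
  intro U hU
  rw [nhds_pi, Filter.mem_pi] at hU
  obtain ⟨I, hIfin, V, hV, hsub⟩ := hU
  choose F hFcard hFcov using fun i => h i (V i) (hV i)
  have hmem : ∀ i (g : H i), ∃ v ∈ V i, ∃ f ∈ F i, v * f = g := by
    intro i g
    have : g ∈ V i * F i := by rw [hFcov i]; trivial
    exact Set.mem_mul.1 this
  refine ⟨{f | (∀ i ∈ I, f i ∈ F i) ∧ ∀ i ∉ I, f i = 1}, ?_, ?_⟩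
  · haveI : Finite ↥I := hIfin
    have hinj : Function.Injective
        (fun (f : {f : ∀ i, H i | (∀ i ∈ I, f i ∈ F i) ∧ ∀ i ∉ I, f i = 1})
          (i : I) => (⟨f.1 i, f.2.1 i i.2⟩ : F i)) := by
      rintro ⟨f, hf⟩ ⟨g, hg⟩ hfg
      ext i
      by_cases hi : i ∈ I
      · exact congrArg Subtype.val (congrFun hfg ⟨i, hi⟩)
      · show f i = g i
        rw [hf.2 i hi, hg.2 i hi]
    calc Cardinal.mk _ ≤ Cardinal.mk (∀ i : I, F i) := Cardinal.mk_le_of_injective hinj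
      _ = Cardinal.prod (fun i : I => Cardinal.mk (F i)) := Cardinal.mk_pi _
      _ ≤ Cardinal.prod (fun _ : I => τ) := Cardinal.prod_le_prod _ _ (fun i => hFcard i)
      _ = τ ^ (Cardinal.mk I) := Cardinal.prod_const' _ _
      _ ≤ τ := Cardinal.pow_le hτ (Cardinal.lt_aleph0_of_finite _)
  · refine eq_univ_of_forall fun g => ?_
    choose v hv f hf hvf using fun i => hmem i (g i)
    refine ⟨fun i => g i * (if i ∈ I then f i else 1)⁻¹, ?_,
      fun i => if i ∈ I then f i else 1, ⟨fun i hi => by simp [hi, hf i], fun i hi => by simp [hi]⟩, ?_⟩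
    · apply hsub
      intro i hi
      simp only [hi, if_pos]
      rw [← hvf i]
      simpa using hv i
    · funext i
      show g i * (if i ∈ I then f i else 1)⁻¹ * (if i ∈ I then f i else 1) = g i
      by_cases hi : i ∈ I <;> simp [hi]

lemma tauPrecompact_of_isInducing {G : Type u} {P : Type u} [Group G] [TopologicalSpace G]
    [IsTopologicalGroup G] [Group P] [TopologicalSpace P] [IsTopologicalGroup P]
    {τ : Cardinal.{u}} (hP : TauPrecompact P τ) (f : G →* P)
    (hf : Topology.IsInducing f) : TauPrecompact G τ := by
  classical
  intro U hU
  have hco : 𝓝 (1:G) = comap f (𝓝 (f 1)) := hf.nhds_eq_comap 1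
  rw [map_one] at hco
  have hU' : U ∈ comap f (𝓝 (1:P)) := hco ▸ hU
  obtain ⟨W₀, hW₀, hW₀sub⟩ := mem_comap.1 hU'
  obtain ⟨W, hWmem, hWsub, hWsymm, hWmul⟩ := exists_symm_sq hW₀
  obtain ⟨FP, hFPcard, hFPcov⟩ := hP W hWmem
  have hex : ∀ p : P, (∃ g₀ : G, f g₀ ∈ W * ({p} : Set P)) ∨ True := fun _ => Or.inr trivial
  set gp : P → G := fun p => if h : ∃ g₀ : G, f g₀ ∈ W * ({p} : Set P) then h.choose else 1
    with hgp
  refine ⟨gp '' FP, Cardinal.mk_image_le.trans hFPcard, eq_univ_of_forall fun g => ?_⟩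
  have hfg : f g ∈ W * FP := by rw [hFPcov]; exact mem_univ _
  obtain ⟨w, hw, p, hp, hwp⟩ := Set.mem_mul.1 hfg
  have hexp : ∃ g₀ : G, f g₀ ∈ W * ({p} : Set P) := ⟨g, w, hw, p, rfl, hwp⟩
  have hmem : f (gp p) ∈ W * ({p} : Set P) := by
    simp only [hgp]
    rw [dif_pos hexp]
    exact hexp.choose_spec
  obtain ⟨w₁, hw₁, p', hp', hww⟩ := Set.mem_mul.1 hmem
  rw [mem_singleton_iff] at hp'
  rw [hp'] at hww
  have hkey : f (g * (gp p)⁻¹) ∈ W₀ := by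
    have heq : f g * (f (gp p))⁻¹ = w * w₁⁻¹ := by rw [← hwp, ← hww]; group
    rw [map_mul, map_inv, heq]
    refine hWmul (mul_mem_mul hw ?_)
    rw [← hWsymm]; exact inv_mem_inv.2 hw₁
  exact ⟨g * (gp p)⁻¹, hW₀sub hkey, gp p, mem_image_of_mem _ hp, by group⟩


end GuranAux

/-- Guran's Embedding Theorem: a group is τ-precompact iff it embeds into a
product of topological groups of weight at most τ. -/
theorem stmt2 (G : Type u) [Group G] [TopologicalSpace G] [IsTopologicalGroup G] [T2Space G]
    (τ : Cardinal.{u}) (hτ : Cardinal.aleph0 ≤ τ) :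
    TauPrecompact G τ ↔
      ∃ (ι : Type u) (H : ι → Type u) (_ : ∀ i, Group (H i))
        (_ : ∀ i, TopologicalSpace (H i)) (_ : ∀ i, IsTopologicalGroup (H i))
        (_ : ∀ i, T2Space (H i)),
        (∀ i, ∃ B : Set (Set (H i)),
          TopologicalSpace.IsTopologicalBasis B ∧ Cardinal.mk B ≤ τ) ∧
        ∃ f : G →* (∀ i, H i), Topology.IsEmbedding f := by

  classical
  constructor
  · intro hp
    have key : ∀ i : {V : Set G // V ∈ 𝓝 (1:G)},
        ∃ (H : Type u) (_ : Group H) (_ : TopologicalSpace H) (_ : IsTopologicalGroup H)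
          (_ : T2Space H),
          (∃ Bs : Set (Set H), TopologicalSpace.IsTopologicalBasis Bs ∧ Cardinal.mk Bs ≤ τ) ∧
          ∃ φ : G →* H, Continuous φ ∧ ∃ W ∈ 𝓝 (1 : H), φ ⁻¹' W ⊆ i.1 :=
      fun i => guran_key hτ hp i.2
    letI iG : ∀ i, Group ((key i).choose) := fun i => (key i).choose_spec.choose
    letI iT : ∀ i, TopologicalSpace ((key i).choose) :=
      fun i => (key i).choose_spec.choose_spec.choose
    letI iTG : ∀ i, IsTopologicalGroup ((key i).choose) :=
      fun i => (key i).choose_spec.choose_spec.choose_spec.choose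
    letI iT2 : ∀ i, T2Space ((key i).choose) :=
      fun i => (key i).choose_spec.choose_spec.choose_spec.choose_spec.choose
    have spec := fun i => (key i).choose_spec.choose_spec.choose_spec.choose_spec.choose_spec
    set φ : ∀ i, G →* ((key i).choose) := fun i => ((spec i).2).choose with hφ
    have hφc : ∀ i, Continuous (φ i) := fun i => ((spec i).2).choose_spec.1
    have hφV : ∀ i, ∃ W ∈ 𝓝 (1 : (key i).choose), (φ i) ⁻¹' W ⊆ i.1 :=
      fun i => ((spec i).2).choose_spec.2
    set f : G →* (∀ i, (key i).choose) := Pi.monoidHom φ with hf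
    have hfc : Continuous f := continuous_pi fun i => hφc i
    have comap_eq : Filter.comap f (𝓝 1) = 𝓝 (1:G) := by
      refine le_antisymm (fun U hU => ?_) ?_
      · set i : {V : Set G // V ∈ 𝓝 (1:G)} := ⟨U, hU⟩ with hi
        obtain ⟨W, hW, hWsub⟩ := hφV i
        refine Filter.mem_comap.2 ⟨(fun h => h i) ⁻¹' W, ?_, ?_⟩
        · exact (continuous_apply i).continuousAt.preimage_mem_nhds hW
        · intro g hg
          exact hWsub hg
      · have ht : Filter.Tendsto f (𝓝 1) (𝓝 1) := by
          have := hfc.tendsto 1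
          rwa [map_one] at this
        exact ht.le_comap
    have hind : Topology.IsInducing f := by
      refine isInducing_iff_nhds.2 fun x => ?_
      have hcomp : ((fun y => y * (f x)⁻¹) ∘ ⇑f) = ⇑f ∘ (fun y => y * x⁻¹) :=
        funext fun g => by
          show f g * (f x)⁻¹ = f (g * x⁻¹)
          rw [map_mul, map_inv]
      have : Filter.comap f (𝓝 (f x)) = 𝓝 x := by
        calc Filter.comap ⇑f (𝓝 (f x))
            = Filter.comap ⇑f (Filter.comap (fun y => y * (f x)⁻¹) (𝓝 1)) := by
              rw [nhds_translation_mul_inv]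
          _ = Filter.comap ((fun y => y * (f x)⁻¹) ∘ ⇑f) (𝓝 1) := Filter.comap_comap
          _ = Filter.comap (⇑f ∘ (fun y => y * x⁻¹)) (𝓝 1) := by rw [hcomp]
          _ = Filter.comap (fun y => y * x⁻¹) (Filter.comap ⇑f (𝓝 1)) :=
              Filter.comap_comap.symm
          _ = Filter.comap (fun y => y * x⁻¹) (𝓝 1) := by rw [comap_eq]
          _ = 𝓝 x := nhds_translation_mul_inv x
      exact this.symm
    have hinj : Function.Injective f := by
      refine (injective_iff_map_eq_one f).2 fun a ha => ?_
      by_contra hne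
      have h1U : ({a}ᶜ : Set G) ∈ 𝓝 (1:G) :=
        isOpen_compl_singleton.mem_nhds (by simp [Ne.symm hne])
      set i : {V : Set G // V ∈ 𝓝 (1:G)} := ⟨{a}ᶜ, h1U⟩ with hi
      obtain ⟨W, hW, hWsub⟩ := hφV i
      have hφa : φ i a = 1 := by
        have : f a i = (1 : ∀ j, (key j).choose) i := by rw [ha]
        exact this
      have hmem : a ∈ (φ i) ⁻¹' W := by
        show φ i a ∈ W
        rw [hφa]
        exact mem_of_mem_nhds hW
      exact (hWsub hmem) rfl
    exact ⟨_, _, iG, iT, iTG, iT2, fun i => (spec i).1, f, hind, hinj⟩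
  · rintro ⟨ι, H, iG, iT, iTG, iT2, hbases, f, hemb⟩
    have hH : ∀ i, TauPrecompact (H i) τ := by
      intro i
      obtain ⟨B, hB, hBcard⟩ := hbases i
      obtain ⟨D, hD, hDcard⟩ := exists_dense_of_basis hB
      exact tauPrecompact_of_dense hD (hDcard.trans hBcard)
    exact tauPrecompact_of_isInducing (tauPrecompact_pi H hτ hH) f hemb.toIsInducing
end

section
/- Every ω-precompact Hausdorff topological group of countable pseudocharacter admits a coarser second countable Hausdorff group topology. -/
open Topology Pointwise

universe u

section GuranConstruction

open Filter Set Uniformity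

variable {G' : Type u} [Group G'] [TopologicalSpace G'] [IsTopologicalGroup G']

theorem guran_triple {N : Set G'} (hN : N ∈ 𝓝 (1 : G')) :
    ∃ V : Set G', IsOpen V ∧ (1 : G') ∈ V ∧ V⁻¹ = V ∧ V * V * V ⊆ N := by
  obtain ⟨W, Wo, W1, hW⟩ := exists_open_nhds_one_mul_subset hN
  obtain ⟨V₀, Vo, V1, hV⟩ := exists_open_nhds_one_mul_subset (Wo.mem_nhds W1)
  have hV₀W : V₀ ⊆ W := fun a ha => by simpa using hV (Set.mul_mem_mul V1 ha)
  refine ⟨V₀ ∩ V₀⁻¹, Vo.inter Vo.inv, ⟨V1, by simpa using V1⟩, ?_, ?_⟩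
  · simp [Set.inter_inv, Set.inter_comm]
  · calc V₀ ∩ V₀⁻¹ * (V₀ ∩ V₀⁻¹) * (V₀ ∩ V₀⁻¹)
        ⊆ V₀ * V₀ * V₀ := by gcongr <;> exact Set.inter_subset_left
      _ ⊆ W * W := Set.mul_subset_mul hV hV₀W
      _ ⊆ N := hW

theorem guran_enum (hω : OmegaPrecompact G') {V : Set G'} (hV : V ∈ 𝓝 (1 : G')) :
    ∃ f : ℕ → G', ∀ x : G', ∃ i, x * (f i)⁻¹ ∈ V := by
  obtain ⟨F, hFc, hFV⟩ := hω V hV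
  obtain ⟨f, hf⟩ := (hFc.insert 1).exists_eq_range (Set.insert_nonempty _ _)
  refine ⟨f, fun x => ?_⟩
  have hx : x ∈ V * F := by rw [hFV]; trivial
  obtain ⟨v, hv, g, hg, rfl⟩ := hx
  have : g ∈ Set.range f := by rw [← hf]; exact Set.mem_insert_of_mem _ hg
  obtain ⟨i, rfl⟩ := this
  exact ⟨i, by simpa using hv⟩

/-- Invariant of the recursive state in Guran's construction. -/
def GuranInv (s : ℕ → Set G') (n : ℕ) (p : Set G' × (ℕ → G')) : Prop :=
  IsOpen p.1 ∧ (1 : G') ∈ p.1 ∧ p.1⁻¹ = p.1 ∧ p.1 ⊆ s n ∧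
    ∀ x : G', ∃ i : ℕ, x * (p.2 (Nat.pair n i))⁻¹ ∈ p.1

theorem guran_base (hω : OmegaPrecompact G') (s : ℕ → Set G') (hs : ∀ n, IsOpen (s n))
    (hs1 : ∀ n, (1 : G') ∈ s n) : ∃ p : Set G' × (ℕ → G'), GuranInv s 0 p := by
  obtain ⟨V, Vo, V1, Vsym, hV⟩ := guran_triple ((hs 0).mem_nhds (hs1 0))
  have hVs : V ⊆ s 0 := fun a ha => hV (by simpa using Set.mul_mem_mul (Set.mul_mem_mul V1 V1) ha)
  obtain ⟨f, hf⟩ := guran_enum hω (Vo.mem_nhds V1)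
  refine ⟨(V, fun m => f m.unpair.2), Vo, V1, Vsym, hVs, fun x => ?_⟩
  obtain ⟨i, hi⟩ := hf x
  exact ⟨i, by simpa [Nat.unpair_pair] using hi⟩

theorem guran_step (hω : OmegaPrecompact G') (s : ℕ → Set G') (hs : ∀ n, IsOpen (s n))
    (hs1 : ∀ n, (1 : G') ∈ s n) (n : ℕ) (p : Set G' × (ℕ → G')) (hp : GuranInv s n p) :
    ∃ q : Set G' × (ℕ → G'), GuranInv s (n + 1) q ∧
      q.1 * q.1 * q.1 ⊆ p.1 ∧
      (∀ v ∈ q.1, (p.2 n.unpair.1) * v * (p.2 n.unpair.1)⁻¹ ∈ p.1) ∧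
      (∀ m : ℕ, m.unpair.1 ≠ n + 1 → q.2 m = p.2 m) := by
  obtain ⟨po, p1, psym, hps, pcov⟩ := hp
  set c := p.2 n.unpair.1 with hc
  have hconj : (fun g : G' => c * g * c⁻¹) ⁻¹' p.1 ∈ 𝓝 (1 : G') := by
    have hcont : Continuous fun g : G' => c * g * c⁻¹ :=
      (continuous_const.mul continuous_id).mul continuous_const
    apply (hcont.continuousAt (x := (1 : G'))).preimage_mem_nhds
    simpa using po.mem_nhds p1
  have hN : p.1 ∩ s (n + 1) ∩ (fun g : G' => c * g * c⁻¹) ⁻¹' p.1 ∈ 𝓝 (1 : G') :=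
    Filter.inter_mem (Filter.inter_mem (po.mem_nhds p1) ((hs _).mem_nhds (hs1 _))) hconj
  obtain ⟨V, Vo, V1, Vsym, hV⟩ := guran_triple hN
  have hVsub : V ⊆ p.1 ∩ s (n + 1) ∩ (fun g : G' => c * g * c⁻¹) ⁻¹' p.1 := fun a ha =>
    hV (by simpa using Set.mul_mem_mul (Set.mul_mem_mul V1 V1) ha)
  obtain ⟨f, hf⟩ := guran_enum hω (Vo.mem_nhds V1)
  refine ⟨(V, fun m => if m.unpair.1 = n + 1 then f m.unpair.2 else p.2 m),
    ⟨Vo, V1, Vsym, fun a ha => (hVsub ha).1.2, fun x => ?_⟩, ?_, ?_, ?_⟩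
  · obtain ⟨i, hi⟩ := hf x
    exact ⟨i, by simpa [Nat.unpair_pair] using hi⟩
  · exact fun a ha => ((hV ha)).1.1
  · exact fun v hv => (hVsub hv).2
  · intro m hm; simp [hm]

noncomputable def guranSeq (hω : OmegaPrecompact G') (s : ℕ → Set G') (hs : ∀ n, IsOpen (s n))
    (hs1 : ∀ n, (1 : G') ∈ s n) : (n : ℕ) → {p : Set G' × (ℕ → G') // GuranInv s n p}
  | 0 => ⟨Classical.choose (guran_base hω s hs hs1),
      Classical.choose_spec (guran_base hω s hs hs1)⟩
  | n + 1 => ⟨Classical.choose (guran_step hω s hs hs1 n (guranSeq hω s hs hs1 n).1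
        (guranSeq hω s hs hs1 n).2),
      (Classical.choose_spec (guran_step hω s hs hs1 n (guranSeq hω s hs hs1 n).1
        (guranSeq hω s hs hs1 n).2)).1⟩

theorem guranSeq_spec (hω : OmegaPrecompact G') (s : ℕ → Set G') (hs : ∀ n, IsOpen (s n))
    (hs1 : ∀ n, (1 : G') ∈ s n) (n : ℕ) :
    let q := (guranSeq hω s hs hs1 (n + 1)).1
    let p := (guranSeq hω s hs hs1 n).1
    q.1 * q.1 * q.1 ⊆ p.1 ∧
      (∀ v ∈ q.1, (p.2 n.unpair.1) * v * (p.2 n.unpair.1)⁻¹ ∈ p.1) ∧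
      (∀ m : ℕ, m.unpair.1 ≠ n + 1 → q.2 m = p.2 m) :=
  (Classical.choose_spec (guran_step hω s hs hs1 n (guranSeq hω s hs hs1 n).1
      (guranSeq hω s hs hs1 n).2)).2

theorem guran_exists (hω : OmegaPrecompact G') (s : ℕ → Set G') (hs : ∀ n, IsOpen (s n))
    (hs1 : ∀ n, (1 : G') ∈ s n) :
    ∃ (V : ℕ → Set G') (e : ℕ → ℕ → G'),
      (∀ n, IsOpen (V n)) ∧ (∀ n, (1 : G') ∈ V n) ∧ (∀ n, (V n)⁻¹ = V n) ∧
      (∀ n, V n ⊆ s n) ∧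
      (∀ n, V (n + 1) * V (n + 1) * V (n + 1) ⊆ V n) ∧
      (∀ n, ∀ v ∈ V (n + 1), (e n n.unpair.1) * v * (e n n.unpair.1)⁻¹ ∈ V n) ∧
      (∀ n, ∀ x : G', ∃ i, x * (e n (Nat.pair n i))⁻¹ ∈ V n) ∧
      (∀ n k i, k ≤ n → e n (Nat.pair k i) = e k (Nat.pair k i)) := by
  refine ⟨fun n => (guranSeq hω s hs hs1 n).1.1, fun n => (guranSeq hω s hs hs1 n).1.2,
    fun n => (guranSeq hω s hs hs1 n).2.1, fun n => (guranSeq hω s hs hs1 n).2.2.1,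
    fun n => (guranSeq hω s hs hs1 n).2.2.2.1, fun n => (guranSeq hω s hs hs1 n).2.2.2.2.1,
    fun n => (guranSeq_spec hω s hs hs1 n).1, fun n => (guranSeq_spec hω s hs hs1 n).2.1,
    fun n => (guranSeq hω s hs hs1 n).2.2.2.2.2, ?_⟩
  intro n k i hk
  induction n with
  | zero =>
    obtain rfl : k = 0 := Nat.le_zero.mp hk
    rfl
  | succ n ih =>
    show (guranSeq hω s hs hs1 (n+1)).1.2 (Nat.pair k i) = _
    rcases Nat.lt_or_ge k (n + 1) with h | h
    · rw [(guranSeq_spec hω s hs hs1 n).2.2 (Nat.pair k i) (by rw [Nat.unpair_pair]; omega)]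
      exact ih (by omega)
    · obtain rfl : k = n + 1 := le_antisymm hk h
      rfl

end GuranConstruction

theorem guran_helper {H : Type u} [Group H] [τ : TopologicalSpace H] [IsTopologicalGroup H]
    (V : ℕ → Set H)
    (hbasis : (𝓝 (1 : H)).HasBasis (fun _ : ℕ => True) V)
    (hsep : ∀ x : H, x ≠ 1 → ∃ n, x ∉ V n)
    (e : ℕ → ℕ → H)
    (hcov : ∀ n (x : H), ∃ i, x * (e n (Nat.pair n i))⁻¹ ∈ V n) :
    T2Space H ∧ SecondCountableTopology H := by
  have hmem : ∀ n, V n ∈ 𝓝 (1 : H) := fun n => hbasis.mem_of_mem trivial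
  constructor
  · exact IsTopologicalGroup.t2Space_of_one_sep fun x hx =>
      let ⟨n, hn⟩ := hsep x hx; ⟨V n, hmem n, hn⟩
  · set D : Set H := Set.range (fun p : ℕ × ℕ => (e p.1 (Nat.pair p.1 p.2))⁻¹) with hD
    have hDc : D.Countable := Set.countable_range _
    have hDd : Dense D := by
      rw [dense_iff_inter_open]
      rintro U hU ⟨x, hx⟩
      have hU1 : (fun y => x * y) ⁻¹' U ∈ 𝓝 (1 : H) := by
        apply (continuous_mul_left x).continuousAt.preimage_mem_nhds
        simpa using hU.mem_nhds hx
      obtain ⟨n, -, hn⟩ := hbasis.mem_iff.1 hU1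
      obtain ⟨i, hi⟩ := hcov n x⁻¹
      refine ⟨(e n (Nat.pair n i))⁻¹, ?_, ⟨(n, i), rfl⟩⟩
      have : x * (x⁻¹ * (e n (Nat.pair n i))⁻¹) ∈ U := hn hi
      simpa using this
    haveI : TopologicalSpace.SeparableSpace H := ⟨⟨D, hDc, hDd⟩⟩
    letI u : UniformSpace H := IsTopologicalGroup.rightUniformSpace H
    haveI : (𝓝 (1 : H)).IsCountablyGenerated := hbasis.isCountablyGenerated
    haveI : (uniformity H).IsCountablyGenerated := by
      rw [uniformity_eq_comap_nhds_one' H]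
      exact Filter.comap.isCountablyGenerated _ _
    exact UniformSpace.secondCountable_of_separable H

/-- Every ω-precompact Hausdorff group of countable pseudocharacter admits a
coarser second countable Hausdorff group topology. -/
theorem stmt3 (G : Type u) [Group G] [t : TopologicalSpace G] [IsTopologicalGroup G] [T2Space G]
    (hω : OmegaPrecompact G) (hψ : CountablePseudocharacter G) :
    ∃ t' : TopologicalSpace G, t ≤ t' ∧ @IsTopologicalGroup G t' _ ∧ @T2Space G t' ∧
      @SecondCountableTopology G t' := by
  obtain ⟨s, hs, hsInt⟩ := hψ
  have hs1 : ∀ n, (1 : G) ∈ s n := fun n => by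
    have h1 : (1 : G) ∈ ⋂ n, s n := by rw [hsInt]; rfl
    exact Set.mem_iInter.1 h1 n
  obtain ⟨V, e, hopen, hone, hsym, hVs, htriple, hconj, hcov, hstab⟩ := guran_exists hω s hs hs1
  have hsucc : ∀ n, V (n + 1) ⊆ V n := fun n a ha => by
    simpa using htriple n
      (Set.mul_mem_mul (Set.mul_mem_mul (hone (n + 1)) (hone (n + 1))) ha :
        (1 : G) * 1 * a ∈ _)
  have hmono : ∀ m n, m ≤ n → V n ⊆ V m := by
    intro m n h
    induction n with
    | zero =>
      obtain rfl : m = 0 := Nat.le_zero.mp h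
      exact subset_rfl
    | succ n ih =>
      rcases Nat.lt_or_ge m (n + 1) with h' | h'
      · exact (hsucc n).trans (ih (by omega))
      · obtain rfl : m = n + 1 := le_antisymm h h'
        exact subset_rfl
  have conjKey : ∀ (x : G) (n : ℕ), ∃ m, ∀ v ∈ V m, x * v * x⁻¹ ∈ V n := by
    intro x n
    obtain ⟨i, hi⟩ := hcov (n + 1) x
    set d := e (n + 1) (Nat.pair (n + 1) i) with hd
    set m := Nat.pair (Nat.pair (n + 1) i) (n + 1) with hm
    have hm1 : n + 1 ≤ m := Nat.right_le_pair _ _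
    have hme : e m m.unpair.1 = d := by
      rw [hm, Nat.unpair_pair]
      exact hstab _ (n + 1) i (Nat.right_le_pair _ _)
    refine ⟨m + 1, fun v hv => ?_⟩
    have h1 : d * v * d⁻¹ ∈ V m := by
      have h2 := hconj m v hv
      rwa [hme] at h2
    have h2 : d * v * d⁻¹ ∈ V (n + 1) := hmono (n + 1) m hm1 h1
    have hv₀ : x * d⁻¹ ∈ V (n + 1) := hi
    have hv₀' : (x * d⁻¹)⁻¹ ∈ V (n + 1) := by
      rw [← hsym (n + 1)]
      exact Set.inv_mem_inv.mpr hv₀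
    have h3 : (x * d⁻¹) * (d * v * d⁻¹) * (x * d⁻¹)⁻¹ ∈ V (n + 1) * V (n + 1) * V (n + 1) :=
      Set.mul_mem_mul (Set.mul_mem_mul hv₀ h2) hv₀'
    have heq : x * v * x⁻¹ = (x * d⁻¹) * (d * v * d⁻¹) * (x * d⁻¹)⁻¹ := by group
    rw [heq]
    exact htriple n h3
  let B : GroupFilterBasis G :=
    { sets := Set.range V
      nonempty := ⟨V 0, 0, rfl⟩
      inter_sets := by
        rintro _ _ ⟨a, rfl⟩ ⟨b, rfl⟩
        exact ⟨V (max a b), ⟨max a b, rfl⟩,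
          Set.subset_inter (hmono a _ (le_max_left a b)) (hmono b _ (le_max_right a b))⟩
      one' := by rintro _ ⟨n, rfl⟩; exact hone n
      mul' := by
        rintro _ ⟨n, rfl⟩
        exact ⟨V (n + 1), ⟨n + 1, rfl⟩,
          (Set.subset_mul_left _ (hone (n + 1))).trans (htriple n)⟩
      inv' := by
        rintro _ ⟨n, rfl⟩
        refine ⟨V n, ⟨n, rfl⟩, fun x hx => ?_⟩
        rw [Set.mem_preimage, ← hsym n]
        simpa using hx
      conj' := by
        rintro x₀ _ ⟨n, rfl⟩
        obtain ⟨m, hm⟩ := conjKey x₀ n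
        exact ⟨V m, ⟨m, rfl⟩, fun v hv => hm v hv⟩ }
  refine ⟨B.topology, ?_, B.isTopologicalGroup, ?_, ?_⟩
  · apply le_of_nhds_le_nhds
    intro x
    rw [(B.nhds_hasBasis x).ge_iff]
    rintro W hW
    obtain ⟨n, rfl⟩ := hW
    exact ((isOpenMap_mul_left x) _ (hopen n)).mem_nhds ⟨1, hone n, mul_one x⟩
  all_goals {
    have hbasis : (@nhds G B.topology (1 : G)).HasBasis (fun _ : ℕ => True) V := by
      refine B.nhds_one_hasBasis.to_hasBasis ?_ ?_
      · rintro W hW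
        obtain ⟨n, rfl⟩ := hW
        exact ⟨n, trivial, subset_rfl⟩
      · exact fun n _ => ⟨V n, ⟨n, rfl⟩, subset_rfl⟩
    have hsep : ∀ x : G, x ≠ 1 → ∃ n, x ∉ V n := by
      intro x hx
      by_contra h
      push_neg at h
      have : x ∈ ⋂ n, s n := Set.mem_iInter.2 fun n => hVs n (h n)
      rw [hsInt] at this
      exact hx this
    have := @guran_helper G _ B.topology B.isTopologicalGroup V hbasis hsep e hcov
    first
      | exact this.1
      | exact this.2 }
end

section
/- Let G be an ω-precompact, sequentially h-complete Hausdorff topological group. Then the following are equivalent: (i) G is second countable; (ii) G has a countable network; (iii) G has countable pseudocharacter; (iv) G is metrizable. -/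
open Topology Pointwise

universe u

set_option linter.unusedSectionVars false
set_option maxHeartbeats 1000000

namespace DTaux
open Filter Set Uniformity

def trip (n : ℕ) : ℕ × ℕ × ℕ :=
  ((n.unpair.2).unpair.1, ((n.unpair.2).unpair.2).unpair.1, ((n.unpair.2).unpair.2).unpair.2)

lemma trip_surj (k i j N : ℕ) : ∃ n, N ≤ n ∧ trip n = (k, i, j) := by
  refine ⟨Nat.pair N (Nat.pair k (Nat.pair i j)), Nat.left_le_pair _ _, ?_⟩
  simp [trip, Nat.unpair_pair]


variable {G : Type u} [Group G] [TopologicalSpace G] [IsTopologicalGroup G]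

lemma subset_of_sq {V W : Set G} (h1 : (1:G) ∈ V) (h : V * V ⊆ W) : V ⊆ W :=
  fun x hx => h (by simpa using Set.mul_mem_mul hx h1)

lemma step_ex (hω : OmegaPrecompact G) (A T t' : Set G) (hA : IsOpen A) (hA1 : (1:G) ∈ A)
    (hT : IsOpen T) (hT1 : (1:G) ∈ T) (ht' : IsOpen t') (ht1 : (1:G) ∈ t') (c : G) :
    ∃ p : Set G × (ℕ → G), IsOpen p.1 ∧ (1:G) ∈ p.1 ∧ p.1⁻¹ = p.1 ∧
      p.1 * p.1 * p.1 ⊆ A ∧ p.1 ⊆ t' ∧ (∀ w ∈ p.1, c * w * c⁻¹ ∈ T) ∧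
      univ ⊆ p.1 * range p.2 := by
  obtain ⟨V₁, hV₁o, hV₁1, hV₁⟩ := exists_open_nhds_one_mul_subset (hA.mem_nhds hA1)
  obtain ⟨V₂, hV₂o, hV₂1, hV₂⟩ := exists_open_nhds_one_mul_subset (hV₁o.mem_nhds hV₁1)
  have hV₂V₁ : V₂ ⊆ V₁ := subset_of_sq hV₂1 hV₂
  have h3 : V₂ * V₂ * V₂ ⊆ A := by
    calc V₂ * V₂ * V₂ ⊆ V₁ * V₁ := Set.mul_subset_mul hV₂ hV₂V₁
    _ ⊆ A := hV₁
  have hconjcont : Continuous (fun w : G => c * w * c⁻¹) := by continuity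
  set C : Set G := (fun w : G => c * w * c⁻¹) ⁻¹' T with hC
  have hCo : IsOpen C := hT.preimage hconjcont
  have hC1 : (1:G) ∈ C := by simp [hC, hT1]
  set W₀ : Set G := V₂ ∩ t' ∩ C with hW₀
  have hW₀o : IsOpen W₀ := ((hV₂o.inter ht').inter hCo)
  set W : Set G := W₀ ∩ W₀⁻¹ with hWdef
  have hWo : IsOpen W := hW₀o.inter hW₀o.inv
  have hW1 : (1:G) ∈ W := by
    constructor
    · exact ⟨⟨hV₂1, ht1⟩, hC1⟩
    · simp only [Set.mem_inv, inv_one]; exact ⟨⟨hV₂1, ht1⟩, hC1⟩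
  have hWsymm : W⁻¹ = W := by
    rw [hWdef, Set.inter_inv, inv_inv, Set.inter_comm]
  have hWW₀ : W ⊆ W₀ := Set.inter_subset_left
  obtain ⟨F, hFc, hWF⟩ := hω W (hWo.mem_nhds hW1)
  obtain ⟨en, hen⟩ := (hFc.insert 1).exists_eq_range (Set.insert_nonempty _ _)
  refine ⟨(W, en), hWo, hW1, hWsymm, ?_, ?_, ?_, ?_⟩
  · exact fun x hx => h3 (by
      exact Set.mul_subset_mul (Set.mul_subset_mul (fun a ha => (hWW₀ ha).1.1)
        (fun a ha => (hWW₀ ha).1.1)) (fun a ha => (hWW₀ ha).1.1) hx)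
  · exact fun x hx => (hWW₀ hx).1.2
  · exact fun w hw => (hWW₀ hw).2
  · rw [← hWF]
    refine Set.mul_subset_mul_left ?_
    rw [← hen]; exact Set.subset_insert _ _





/-- The state of the Guran construction. -/
abbrev GState (G : Type u) : Type u := (ℕ → Set G) × (ℕ → ℕ → G)

def GInv (s : GState G) : Prop := ∀ k, IsOpen (s.1 k) ∧ (1:G) ∈ s.1 k

def GProps (t : ℕ → Set G) (n : ℕ) (prev next : GState G) : Prop :=
  (∀ k, k ≠ n → next.1 k = prev.1 k ∧ next.2 k = prev.2 k) ∧
  IsOpen (next.1 n) ∧ (1:G) ∈ next.1 n ∧ (next.1 n)⁻¹ = next.1 n ∧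
  next.1 n ⊆ t n ∧
  (∀ m, n = m + 1 → next.1 n * next.1 n * next.1 n ⊆ prev.1 m) ∧
  ((trip n).1 < n → (trip n).2.2 < n → ∀ w ∈ next.1 n,
      (prev.2 (trip n).1 (trip n).2.1) * w * (prev.2 (trip n).1 (trip n).2.1)⁻¹
        ∈ prev.1 (trip n).2.2) ∧
  univ ⊆ next.1 n * range (next.2 n)

lemma gkey (hω : OmegaPrecompact G) (t : ℕ → Set G) (ht : ∀ n, IsOpen (t n))
    (ht1 : ∀ n, (1:G) ∈ t n) (n : ℕ) (prev : GState G) (hprev : GInv prev) :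
    ∃ next : GState G, GInv next ∧ GProps t n prev next := by
  classical
  set A : Set G := if n = 0 then univ else prev.1 (n - 1) with hAdef
  have hA : IsOpen A ∧ (1:G) ∈ A := by
    rw [hAdef]; split
    · exact ⟨isOpen_univ, mem_univ 1⟩
    · exact hprev _
  set ok : Prop := (trip n).1 < n ∧ (trip n).2.2 < n with hokdef
  set c : G := if ok then prev.2 (trip n).1 (trip n).2.1 else 1 with hcdef
  set T : Set G := if ok then prev.1 (trip n).2.2 else univ with hTdef
  have hT : IsOpen T ∧ (1:G) ∈ T := by
    rw [hTdef]; split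
    · exact hprev _
    · exact ⟨isOpen_univ, mem_univ 1⟩
  obtain ⟨p, hpo, hp1, hpsymm, hp3, hpt, hpconj, hpcov⟩ :=
    step_ex hω A T (t n) hA.1 hA.2 hT.1 hT.2 (ht n) (ht1 n) c
  refine ⟨(Function.update prev.1 n p.1, Function.update prev.2 n p.2), ?_, ?_⟩
  · intro k
    rcases eq_or_ne k n with rfl | hk
    · simpa using ⟨hpo, hp1⟩
    · simpa [Function.update_of_ne hk] using hprev k
  · refine ⟨?_, ?_, ?_, ?_, ?_, ?_, ?_, ?_⟩
    · intro k hk; exact ⟨Function.update_of_ne hk _ _, Function.update_of_ne hk _ _⟩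
    · simpa using hpo
    · simpa using hp1
    · simpa using hpsymm
    · simpa using hpt
    · intro m hm
      simp only [Function.update_self]
      have : A = prev.1 m := by rw [hAdef, hm]; simp
      rw [← this]; exact hp3
    · intro h1 h2
      have hok : ok = True := by simp [hokdef, h1, h2]
      have hc : c = prev.2 (trip n).1 (trip n).2.1 := by
        rw [hcdef]; exact if_pos ⟨h1, h2⟩
      have hT' : T = prev.1 (trip n).2.2 := by
        rw [hTdef]; exact if_pos ⟨h1, h2⟩
      intro w hw
      simp only [Function.update_self] at hw
      rw [← hT', ← hc]; exact hpconj w hw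
    · simpa using hpcov

theorem guran (hω : OmegaPrecompact G) (t : ℕ → Set G) (ht : ∀ n, IsOpen (t n))
    (ht1 : ∀ n, (1:G) ∈ t n) :
    ∃ (U : ℕ → Set G) (E : ℕ → ℕ → G),
      (∀ n, IsOpen (U n)) ∧ (∀ n, (1:G) ∈ U n) ∧ (∀ n, (U n)⁻¹ = U n) ∧
      (∀ n, U n ⊆ t n) ∧ (∀ n, U (n+1) * U (n+1) * U (n+1) ⊆ U n) ∧
      (∀ n, univ ⊆ U n * range (E n)) ∧
      (∀ (x : G) (m : ℕ), ∃ n, ∀ w ∈ U n, x * w * x⁻¹ ∈ U m) := by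
  classical
  set init : GState G := (fun _ => univ, fun _ _ => 1) with hinitdef
  have hinit : GInv init := fun k => ⟨isOpen_univ, mem_univ 1⟩
  let g : ℕ → Σ' s : GState G, GInv s := fun n => Nat.rec ⟨init, hinit⟩
    (fun n p => ⟨Classical.choose (gkey hω t ht ht1 n p.1 p.2),
      (Classical.choose_spec (gkey hω t ht ht1 n p.1 p.2)).1⟩) n
  have hstep : ∀ n, GProps t n (g n).1 (g (n+1)).1 := fun n =>
    (Classical.choose_spec (gkey hω t ht ht1 n (g n).1 (g n).2)).2
  set U : ℕ → Set G := fun n => ((g (n+1)).1).1 n with hUdef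
  set E : ℕ → ℕ → G := fun n => ((g (n+1)).1).2 n with hEdef
  have stab : ∀ k m, k < m → ((g m).1).1 k = U k ∧ ((g m).1).2 k = E k := by
    intro k m
    induction m with
    | zero => omega
    | succ m ih =>
      intro h
      rcases Nat.lt_succ_iff_lt_or_eq.mp h with h' | rfl
      · have hne : k ≠ m := by omega
        obtain ⟨e1, e2⟩ := (hstep m).1 k hne
        exact ⟨e1.trans (ih h').1, e2.trans (ih h').2⟩
      · exact ⟨rfl, rfl⟩
  have hUo : ∀ n, IsOpen (U n) := fun n => (hstep n).2.1
  have hU1 : ∀ n, (1:G) ∈ U n := fun n => (hstep n).2.2.1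
  have hUsymm : ∀ n, (U n)⁻¹ = U n := fun n => (hstep n).2.2.2.1
  have hUt : ∀ n, U n ⊆ t n := fun n => (hstep n).2.2.2.2.1
  have hU3 : ∀ n, U (n+1) * U (n+1) * U (n+1) ⊆ U n := by
    intro n
    have := (hstep (n+1)).2.2.2.2.2.1 n rfl
    exact this
  have hcov : ∀ n, univ ⊆ U n * range (E n) := fun n => (hstep n).2.2.2.2.2.2.2
  refine ⟨U, E, hUo, hU1, hUsymm, hUt, hU3, hcov, ?_⟩
  intro x m
  have hx : x ∈ U (m+1) * range (E (m+1)) := hcov (m+1) (mem_univ x)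
  obtain ⟨u, hu, e, ⟨i, rfl⟩, rfl⟩ := hx
  obtain ⟨n, hn, htr⟩ := trip_surj (m+1) i (m+1) (m+2)
  refine ⟨n, fun w hw => ?_⟩
  have hlt : m + 1 < n := by omega
  have h1 : (trip n).1 < n := by rw [htr]; exact hlt
  have h2 : (trip n).2.2 < n := by rw [htr]; exact hlt
  have hconj := (hstep n).2.2.2.2.2.2.1 h1 h2 w hw
  rw [htr] at hconj
  simp only at hconj
  have hUm : ((g n).1).1 (m+1) = U (m+1) := (stab (m+1) n hlt).1
  rw [hUm] at hconj
  have hE' : ((g n).1).2 (m+1) = E (m+1) := (stab (m+1) n hlt).2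
  rw [hE'] at hconj
  -- hconj : E (m+1) i * w * (E (m+1) i)⁻¹ ∈ U (m+1)
  have hxw : (u * E (m+1) i) * w * (u * E (m+1) i)⁻¹
      = u * (E (m+1) i * w * (E (m+1) i)⁻¹) * u⁻¹ := by group
  rw [hxw]
  have huinv : u⁻¹ ∈ U (m+1) := by
    rw [← hUsymm (m+1)]; exact Set.inv_mem_inv.mpr hu
  exact hU3 m (Set.mul_mem_mul (Set.mul_mem_mul hu hconj) huinv)


lemma closure_mul_closure_subset (s t : Set G) : closure s * closure t ⊆ closure (s * t) := by
  have h1 : closure s ×ˢ closure t = closure (s ×ˢ t) := (closure_prod_eq).symm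
  calc closure s * closure t = (fun p : G × G => p.1 * p.2) '' (closure s ×ˢ closure t) := by
        rw [Set.image_mul_prod]
    _ ⊆ closure ((fun p : G × G => p.1 * p.2) '' (s ×ˢ t)) := by
        rw [h1]; exact image_closure_subset_closure_image continuous_mul
    _ = closure (s * t) := by rw [Set.image_mul_prod]

lemma mem_mul_of_mem_closure {s V : Set G} {p : G} (hp : p ∈ closure s)
    (hV : V ∈ 𝓝 (1:G)) (hVs : V⁻¹ = V) : p ∈ V * s := by
  have hT : (fun x : G => x * p⁻¹) ⁻¹' V ∈ 𝓝 p := by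
    have hca : ContinuousAt (fun x : G => x * p⁻¹) p := (continuous_mul_right _).continuousAt
    apply hca.preimage_mem_nhds
    have h1 : p * p⁻¹ = (1:G) := by group
    rw [h1]; exact hV
  obtain ⟨a, haT, has⟩ := mem_closure_iff_nhds.mp hp _ hT
  refine ⟨(a * p⁻¹)⁻¹, by rw [← hVs]; exact Set.inv_mem_inv.mpr haT, a, has, by group⟩

lemma four_sub_ex {S : Set G} (hS : S ∈ 𝓝 (1:G)) :
    ∃ V : Set G, V ∈ 𝓝 (1:G) ∧ V⁻¹ = V ∧ V * V * V * V ⊆ S := by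
  obtain ⟨V₁, hV₁o, hV₁1, hV₁⟩ := exists_open_nhds_one_mul_subset hS
  obtain ⟨V₂, hV₂o, hV₂1, hV₂⟩ := exists_open_nhds_one_mul_subset (hV₁o.mem_nhds hV₁1)
  refine ⟨V₂ ∩ V₂⁻¹, Filter.inter_mem (hV₂o.mem_nhds hV₂1)
    (inv_mem_nhds_one G (hV₂o.mem_nhds hV₂1)), by rw [Set.inter_inv, inv_inv, Set.inter_comm], ?_⟩
  have hsub : V₂ ∩ V₂⁻¹ ⊆ V₂ := Set.inter_subset_left
  calc (V₂ ∩ V₂⁻¹) * (V₂ ∩ V₂⁻¹) * (V₂ ∩ V₂⁻¹) * (V₂ ∩ V₂⁻¹)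
      ⊆ V₂ * V₂ * (V₂ * V₂) := by
        rw [mul_assoc]
        exact Set.mul_subset_mul (Set.mul_subset_mul hsub hsub) (Set.mul_subset_mul hsub hsub)
    _ ⊆ V₁ * V₁ := Set.mul_subset_mul hV₂ hV₂
    _ ⊆ S := hV₁

lemma image_inv_hom {A B : Type u} [Group A] [Group B] (f : A →* B) (V : Set A) :
    (f '' V)⁻¹ = f '' V⁻¹ := by
  ext b
  simp only [Set.mem_inv, Set.mem_image]
  constructor
  · rintro ⟨a, ha, hab⟩
    exact ⟨a⁻¹, by simpa using ha, by rw [map_inv, hab, inv_inv]⟩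
  · rintro ⟨a, ha, rfl⟩
    exact ⟨a⁻¹, ha, by rw [map_inv]⟩


lemma cauchySeq_of_group {q : ℕ → G}
    (h : ∀ S ∈ 𝓝 (1:G), ∃ N, ∀ m, N ≤ m → ∀ n, N ≤ n → q m * (q n)⁻¹ ∈ S) :
    @CauchySeq G ℕ (IsTopologicalGroup.rightUniformSpace G) _ q := by
  letI := IsTopologicalGroup.rightUniformSpace G
  constructor
  · exact Filter.map_neBot
  rw [Filter.prod_map_map_eq, uniformity_eq_comap_nhds_one' G, ← Filter.map_le_iff_le_comap,
    Filter.map_map]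
  intro S hS
  obtain ⟨N, hN⟩ := h S hS
  rw [Filter.mem_map]
  refine Filter.mem_prod_iff.mpr ⟨Set.Ici N, Filter.Ici_mem_atTop N, Set.Ici N,
    Filter.Ici_mem_atTop N, ?_⟩
  rintro ⟨m, n⟩ ⟨hm, hn⟩
  have := hN n hn m hm
  simpa [div_eq_mul_inv] using this

theorem openmap_aux {A B : Type u} [Group A] [TopologicalSpace A] [IsTopologicalGroup A]
    [FirstCountableTopology A]
    [Group B] [TopologicalSpace B] [IsTopologicalGroup B] [T2Space B] [FirstCountableTopology B]
    (hB : BaireSpace B) (hAc : SeqComplete A)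
    (hcov : ∀ V ∈ 𝓝 (1:A), ∃ D : Set A, D.Countable ∧ V * D = Set.univ)
    (f : A →* B) (hf : Continuous f) (hsurj : Function.Surjective f)
    {O : Set A} (hO : O ∈ 𝓝 1) : f '' O ∈ 𝓝 (1:B) := by
  classical
  haveI := hB
  -- Claim 1 : for symmetric V ∈ 𝓝 1, closure (f '' (V*V)) ∈ 𝓝 1.
  have claim1 : ∀ V : Set A, V ∈ 𝓝 (1:A) → V⁻¹ = V → closure (f '' (V * V)) ∈ 𝓝 (1:B) := by
    intro V hV hVsymm
    obtain ⟨D, hD, hVD⟩ := hcov V hV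
    haveI : Countable D := hD.to_subtype
    have hcoverB : ⋃ d : D, (fun b => b * f d) '' closure (f '' V) = univ := by
      apply Set.eq_univ_of_forall
      intro b
      obtain ⟨a, rfl⟩ := hsurj b
      have ha : a ∈ V * D := by rw [hVD]; exact mem_univ a
      obtain ⟨v, hv, d, hd, rfl⟩ := ha
      refine Set.mem_iUnion.mpr ⟨⟨d, hd⟩, ⟨f v, subset_closure (Set.mem_image_of_mem f hv), ?_⟩⟩
      rw [map_mul]
    obtain ⟨d, hd⟩ := nonempty_interior_of_iUnion_of_closed
      (fun d : D => (Homeomorph.mulRight (f d)).isClosedMap _ isClosed_closure) hcoverB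
    rw [← Homeomorph.image_interior] at hd
    obtain ⟨_, c₀, hc₀, rfl⟩ := hd
    set P := interior (closure (f '' V)) with hP
    have hN₀o : IsOpen ((fun y => c₀⁻¹ * y) '' P) :=
      (Homeomorph.mulLeft c₀⁻¹).isOpenMap _ isOpen_interior
    have hN₀1 : (1:B) ∈ (fun y => c₀⁻¹ * y) '' P := ⟨c₀, hc₀, by group⟩
    have hN₀sub : (fun y => c₀⁻¹ * y) '' P ⊆ closure (f '' (V * V)) := by
      rintro _ ⟨p, hp, rfl⟩
      have h1 : c₀⁻¹ ∈ closure (f '' V) := by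
        have : c₀ ∈ closure (f '' V) := interior_subset hc₀
        have h2 : c₀⁻¹ ∈ (closure (f '' V))⁻¹ := Set.inv_mem_inv.mpr this
        rwa [inv_closure, image_inv_hom, hVsymm] at h2
      have h2 : p ∈ closure (f '' V) := interior_subset hp
      have := closure_mul_closure_subset (f '' V) (f '' V) (Set.mul_mem_mul h1 h2)
      rwa [← Set.image_mul f] at this
    exact mem_nhds_iff.mpr ⟨_, hN₀sub, hN₀o, hN₀1⟩
  -- antitone bases
  obtain ⟨bA, hbA⟩ := (𝓝 (1:A)).exists_antitone_basis
  obtain ⟨sB, hsB⟩ := (𝓝 (1:B)).exists_antitone_basis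
  have bAmem : ∀ n, bA n ∈ 𝓝 (1:A) := fun n => hbA.1.mem_of_mem trivial
  have sBmem : ∀ n, sB n ∈ 𝓝 (1:B) := fun n => hsB.1.mem_of_mem trivial
  -- the shrinking symmetric sequence V
  let ch : ∀ S : Set A, S ∈ 𝓝 (1:A) → {V : Set A // V ∈ 𝓝 (1:A) ∧ V⁻¹ = V ∧ V * V * V * V ⊆ S} :=
    fun S hS => ⟨Classical.choose (four_sub_ex hS), (Classical.choose_spec (four_sub_ex hS)).1,
      (Classical.choose_spec (four_sub_ex hS)).2.1, (Classical.choose_spec (four_sub_ex hS)).2.2⟩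
  let Vs : ℕ → {V : Set A // V ∈ 𝓝 (1:A) ∧ V⁻¹ = V} := fun n => Nat.rec
    ⟨(ch (O ∩ bA 0) (Filter.inter_mem hO (bAmem 0))).1,
      (ch (O ∩ bA 0) (Filter.inter_mem hO (bAmem 0))).2.1,
      (ch (O ∩ bA 0) (Filter.inter_mem hO (bAmem 0))).2.2.1⟩
    (fun n p => ⟨(ch (p.1 ∩ bA (n+1)) (Filter.inter_mem p.2.1 (bAmem (n+1)))).1,
      (ch (p.1 ∩ bA (n+1)) (Filter.inter_mem p.2.1 (bAmem (n+1)))).2.1,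
      (ch (p.1 ∩ bA (n+1)) (Filter.inter_mem p.2.1 (bAmem (n+1)))).2.2.1⟩) n
  set V : ℕ → Set A := fun n => (Vs n).1 with hVdef
  have hVmem : ∀ n, V n ∈ 𝓝 (1:A) := fun n => (Vs n).2.1
  have hVsymm : ∀ n, (V n)⁻¹ = V n := fun n => (Vs n).2.2
  have hV1 : ∀ n, (1:A) ∈ V n := fun n => mem_of_mem_nhds (hVmem n)
  have hV04 : V 0 * V 0 * V 0 * V 0 ⊆ O ∩ bA 0 :=
    (ch (O ∩ bA 0) (Filter.inter_mem hO (bAmem 0))).2.2.2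
  have hV4 : ∀ n, V (n+1) * V (n+1) * V (n+1) * V (n+1) ⊆ V n ∩ bA (n+1) :=
    fun n => (ch ((Vs n).1 ∩ bA (n+1)) (Filter.inter_mem (Vs n).2.1 (bAmem (n+1)))).2.2.2
  have hVsub4 : ∀ n, V n ⊆ V n * V n * V n * V n := by
    intro n x hx
    have := Set.mul_mem_mul (Set.mul_mem_mul (Set.mul_mem_mul hx (hV1 n)) (hV1 n)) (hV1 n)
    simpa using this
  have hVbA : ∀ n, V n ⊆ bA n := by
    intro n; cases n with
    | zero => exact fun x hx => (hV04 (hVsub4 0 hx)).2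
    | succ n => exact fun x hx => ((hV4 n) (hVsub4 (n+1) hx)).2
  have hV0O : V 0 * V 0 * V 0 * V 0 ⊆ O := fun x hx => (hV04 hx).1
  set W : ℕ → Set A := fun n => V n * V n with hWdef
  have hWsymm : ∀ n, (W n)⁻¹ = W n := by
    intro n
    show (V n * V n)⁻¹ = V n * V n
    rw [mul_inv_rev, hVsymm]
  have hWsubV : ∀ n, W (n+1) ⊆ V n := by
    intro n x hx
    have h2 : x ∈ V (n+1) * V (n+1) * V (n+1) * V (n+1) := by
      obtain ⟨a, ha, b, hb, rfl⟩ := hx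
      have := Set.mul_mem_mul (Set.mul_mem_mul (Set.mul_mem_mul ha hb) (hV1 (n+1))) (hV1 (n+1))
      simpa [mul_assoc] using this
    exact ((hV4 n) h2).1
  have hVW : ∀ n, V (n+1) * W (n+1) ⊆ V n := by
    intro n x hx
    have h2 : x ∈ V (n+1) * V (n+1) * V (n+1) * V (n+1) := by
      obtain ⟨a, ha, b, hb, rfl⟩ := hx
      obtain ⟨c, hc, d, hd, rfl⟩ := hb
      have := Set.mul_mem_mul (Set.mul_mem_mul (Set.mul_mem_mul ha hc) hd) (hV1 (n+1))
      simpa [mul_assoc] using this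
    exact ((hV4 n) h2).1
  -- symmetric shrinking neighborhoods in B
  set N : ℕ → Set B := fun n => sB n ∩ (sB n)⁻¹ with hNdef
  have hNmem : ∀ n, N n ∈ 𝓝 (1:B) := fun n =>
    Filter.inter_mem (sBmem n) (inv_mem_nhds_one B (sBmem n))
  have hNsymm : ∀ n, (N n)⁻¹ = N n := by
    intro n; show (sB n ∩ (sB n)⁻¹)⁻¹ = _
    rw [Set.inter_inv, inv_inv, Set.inter_comm]
  have hNsB : ∀ n, N n ⊆ sB n := fun n => Set.inter_subset_left
  -- the recursive approximation step
  have key2 : ∀ n (yv : B), yv ∈ closure (f '' (W n)) →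
      ∃ p : A × B, p.1 ∈ W n ∧ p.2 ∈ closure (f '' (W (n+1))) ∧ p.2 ∈ N n ∧
        yv = p.2 * f p.1 := by
    intro n yv hyv
    set M : Set B := closure (f '' (W (n+1))) ∩ N n with hMdef
    have hclW : closure (f '' (W (n+1))) ∈ 𝓝 (1:B) :=
      claim1 (V (n+1)) (hVmem (n+1)) (hVsymm (n+1))
    have hMmem : M ∈ 𝓝 (1:B) := Filter.inter_mem hclW (hNmem n)
    have hMsymm : M⁻¹ = M := by
      rw [hMdef, Set.inter_inv]
      rw [inv_closure]
      rw [image_inv_hom]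
      rw [hWsymm (n+1)]
      rw [hNsymm n]
    have hT : (fun x : B => x * yv⁻¹) ⁻¹' M ∈ 𝓝 yv := by
      have hca : ContinuousAt (fun x : B => x * yv⁻¹) yv := (continuous_mul_right _).continuousAt
      apply hca.preimage_mem_nhds
      have h1 : yv * yv⁻¹ = (1:B) := by group
      rw [h1]; exact hMmem
    obtain ⟨b, hbT, hbW⟩ := mem_closure_iff_nhds.mp hyv _ hT
    obtain ⟨xv, hxv, rfl⟩ := hbW
    refine ⟨(xv, yv * (f xv)⁻¹), hxv, ?_, ?_, by group⟩
    · have h2 : yv * (f xv)⁻¹ ∈ M⁻¹ := by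
        rw [Set.mem_inv]
        have h3 : (yv * (f xv)⁻¹)⁻¹ = f xv * yv⁻¹ := by group
        rw [h3]; exact hbT
      rw [hMsymm] at h2; exact h2.1
    · have h2 : yv * (f xv)⁻¹ ∈ M⁻¹ := by
        rw [Set.mem_inv]
        have h3 : (yv * (f xv)⁻¹)⁻¹ = f xv * yv⁻¹ := by group
        rw [h3]; exact hbT
      rw [hMsymm] at h2; exact h2.2
  -- main inclusion
  have main : closure (f '' (W 0)) ⊆ f '' O := by
    intro y hy
    let ch2 : ∀ n (p : {yv : B // yv ∈ closure (f '' (W n))}),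
        {q : A × B // q.1 ∈ W n ∧ q.2 ∈ closure (f '' (W (n+1))) ∧ q.2 ∈ N n ∧
          p.1 = q.2 * f q.1} :=
      fun n p => ⟨Classical.choose (key2 n p.1 p.2), Classical.choose_spec (key2 n p.1 p.2)⟩
    let Y : ∀ n, {yv : B // yv ∈ closure (f '' (W n))} := fun n => Nat.rec ⟨y, hy⟩
      (fun n p => ⟨(ch2 n p).1.2, (ch2 n p).2.2.1⟩) n
    let x : ℕ → A := fun n => (ch2 n (Y n)).1.1
    have hx : ∀ n, x n ∈ W n := fun n => (ch2 n (Y n)).2.1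
    have hYN : ∀ n, (Y (n+1)).1 ∈ N n := fun n => (ch2 n (Y n)).2.2.2.1
    have hYrec : ∀ n, (Y n).1 = (Y (n+1)).1 * f (x n) := fun n => (ch2 n (Y n)).2.2.2.2
    let q : ℕ → A := fun n => Nat.rec (x 0) (fun n p => x (n+1) * p) n
    have hqs : ∀ n, q (n+1) = x (n+1) * q n := fun n => rfl
    have hyq : ∀ n, y = (Y (n+1)).1 * f (q n) := by
      intro n; induction n with
      | zero => exact hYrec 0
      | succ n ih =>
        rw [ih, hYrec (n+1), hqs, map_mul, mul_assoc]
    have htel : ∀ m n, q (n + 1 + m) * (q n)⁻¹ ∈ V n := by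
      intro m
      induction m with
      | zero =>
        intro n
        have h1 : q (n + 1 + 0) * (q n)⁻¹ = x (n+1) := by
          have : n + 1 + 0 = n + 1 := by omega
          rw [this, hqs]; group
        rw [h1]; exact hWsubV n (hx (n+1))
      | succ m ih =>
        intro n
        have hidx : n + 1 + (m + 1) = (n + 1) + 1 + m := by omega
        have h1 : q (n + 1 + (m+1)) * (q n)⁻¹
            = (q ((n+1) + 1 + m) * (q (n+1))⁻¹) * (q (n+1) * (q n)⁻¹) := by
          rw [hidx]; group
        have h2 : q (n+1) * (q n)⁻¹ = x (n+1) := by rw [hqs]; group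
        rw [h1, h2]
        exact hVW n (Set.mul_mem_mul (ih (n+1)) (hx (n+1)))
    have hcauchy : @CauchySeq A ℕ (IsTopologicalGroup.rightUniformSpace A) _ q := by
      apply cauchySeq_of_group
      intro S hS
      obtain ⟨k, -, hk⟩ := hbA.1.mem_iff.mp hS
      refine ⟨k, fun m hm n hn => ?_⟩
      rcases lt_trichotomy n m with h | h | h
      · obtain ⟨j, rfl⟩ : ∃ j, m = n + 1 + j := ⟨m - n - 1, by omega⟩
        exact hk (hbA.2 hn (hVbA n (htel j n)))
      · subst h
        have h1 : q n * (q n)⁻¹ = 1 := by group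
        rw [h1]; exact hk (mem_of_mem_nhds (hbA.1.mem_of_mem trivial) : (1:A) ∈ bA k)
      · obtain ⟨j, rfl⟩ : ∃ j, n = m + 1 + j := ⟨n - m - 1, by omega⟩
        have h1 : q m * (q (m + 1 + j))⁻¹ = (q (m + 1 + j) * (q m)⁻¹)⁻¹ := by group
        have h2 : (q (m + 1 + j) * (q m)⁻¹)⁻¹ ∈ (V m)⁻¹ := Set.inv_mem_inv.mpr (htel j m)
        rw [hVsymm m] at h2
        rw [h1]
        exact hk (hbA.2 hm (hVbA m h2))
    obtain ⟨pA, hpA⟩ := hAc q hcauchy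
    have hqmem : ∀ n, q n ∈ V 0 * W 0 := by
      intro n
      cases n with
      | zero => exact ⟨1, hV1 0, x 0, hx 0, one_mul _⟩
      | succ n =>
        have hidx : n + 1 = 0 + 1 + n := by omega
        have h1 : q (n+1) = (q (0 + 1 + n) * (q 0)⁻¹) * q 0 := by rw [← hidx]; group
        rw [h1]
        exact Set.mul_mem_mul (htel n 0) (hx 0)
    have hpAcl : pA ∈ closure (V 0 * W 0) :=
      mem_closure_of_tendsto hpA (Filter.Eventually.of_forall hqmem)
    have hpAO : pA ∈ O := by
      have h1 : pA ∈ V 0 * (V 0 * W 0) :=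
        mem_mul_of_mem_closure hpAcl (hVmem 0) (hVsymm 0)
      apply hV0O
      obtain ⟨a, ha, b, ⟨c, hc, d, hd, rfl⟩, rfl⟩ := h1
      obtain ⟨e, he, g', hg', rfl⟩ := hd
      have := Set.mul_mem_mul (Set.mul_mem_mul (Set.mul_mem_mul ha hc) he) hg'
      simpa [mul_assoc] using this
    have h1 : Filter.Tendsto (fun n => f (q n)) Filter.atTop (𝓝 (f pA)) :=
      (hf.tendsto pA).comp hpA
    have h2 : Filter.Tendsto (fun n => (Y (n+1)).1) Filter.atTop (𝓝 (1:B)) :=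
      hsB.tendsto fun n => hNsB n (hYN n)
    have h3 := h2.mul h1
    rw [one_mul] at h3
    have h4 : (fun n => (Y (n+1)).1 * f (q n)) = fun _ : ℕ => y :=
      funext fun n => (hyq n).symm
    rw [h4] at h3
    have h6 : Filter.Tendsto (fun _ : ℕ => y) Filter.atTop (𝓝 y) := tendsto_const_nhds
    have h5 : y = f pA := tendsto_nhds_unique h6 h3
    exact ⟨pA, hpAO, h5.symm⟩
  exact Filter.mem_of_superset (claim1 (V 0) (hVmem 0) (hVsymm 0)) main


/-- Bundle of facts about an auxiliary coarser Polish group topology. -/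
structure SigmaPack (G : Type u) [Group G] [τ : TopologicalSpace G] [IsTopologicalGroup G]
    (t : ℕ → Set G) where
  σ : TopologicalSpace G
  grp : @IsTopologicalGroup G σ _
  t2 : @T2Space G σ
  sc : @SecondCountableTopology G σ
  fc : @FirstCountableTopology G σ
  baire : @BaireSpace G σ
  seqc : @SeqComplete G _ σ grp
  U : ℕ → Set G
  Ubasis : (@nhds G σ (1:G)).HasBasis (fun _ : ℕ => True) U
  Ubasis_x : ∀ x : G, (@nhds G σ x).HasBasis (fun _ : ℕ => True)
    (fun n => (fun y => x * y) '' U n)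
  Ut : ∀ n, U n ⊆ t n
  Uopen : ∀ n, IsOpen[τ] (U n)
  Uone : ∀ n, (1:G) ∈ U n
  le : ∀ S : Set G, IsOpen[σ] S → IsOpen[τ] S

theorem sigma_main [T2Space G] (hω : OmegaPrecompact G) (hs : SeqHComplete G)
    (t : ℕ → Set G) (hto : ∀ n, IsOpen (t n)) (ht1 : ∀ n, (1:G) ∈ t n)
    (htsub : (⋂ n, t n) ⊆ {1}) : Nonempty (SigmaPack G t) := by
  classical
  obtain ⟨U, E, hUo, hU1, hUsymm, hUt, hU3, hUcov, hUconj⟩ := guran hω t hto ht1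
  have hstep : ∀ n, U (n+1) ⊆ U n := fun n x hx => hU3 n (by
    simpa using Set.mul_mem_mul (Set.mul_mem_mul hx (hU1 (n+1))) (hU1 (n+1)))
  have hanti : ∀ a b, a ≤ b → U b ⊆ U a := fun a b h => antitone_nat_of_succ_le hstep h
  let B : GroupFilterBasis G :=
    { sets := Set.range U
      nonempty := ⟨U 0, 0, rfl⟩
      inter_sets := by
        rintro x y ⟨a, rfl⟩ ⟨b, rfl⟩
        exact ⟨U (max a b), ⟨max a b, rfl⟩,
          Set.subset_inter (hanti a _ (le_max_left a b)) (hanti b _ (le_max_right a b))⟩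
      one' := by rintro _ ⟨n, rfl⟩; exact hU1 n
      mul' := by
        rintro _ ⟨n, rfl⟩
        refine ⟨U (n+1), ⟨n+1, rfl⟩, ?_⟩
        rintro x ⟨a, ha, b, hb, rfl⟩
        exact hU3 n (by simpa using Set.mul_mem_mul (Set.mul_mem_mul ha hb) (hU1 (n+1)))
      inv' := by
        rintro _ ⟨n, rfl⟩
        refine ⟨U n, ⟨n, rfl⟩, fun x hx => ?_⟩
        have h2 : x⁻¹ ∈ (U n)⁻¹ := Set.inv_mem_inv.mpr hx
        rwa [hUsymm n] at h2
      conj' := by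
        rintro x₀ _ ⟨m, rfl⟩
        obtain ⟨n, hn⟩ := hUconj x₀ m
        exact ⟨U n, ⟨n, rfl⟩, fun w hw => hn w hw⟩ }
  have hgrp : @IsTopologicalGroup G B.topology _ := B.isTopologicalGroup
  -- neighborhood bases
  have hUb : (@nhds G B.topology (1:G)).HasBasis (fun _ : ℕ => True) U := by
    rw [B.nhds_one_eq]
    refine Filter.hasBasis_iff.mpr fun S => ?_
    rw [B.toFilterBasis.mem_filter_iff]
    constructor
    · rintro ⟨_, ⟨n, rfl⟩, hsub⟩; exact ⟨n, trivial, hsub⟩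
    · rintro ⟨n, -, hsub⟩; exact ⟨U n, ⟨n, rfl⟩, hsub⟩
  have hUbx : ∀ x : G, (@nhds G B.topology x).HasBasis (fun _ : ℕ => True)
      (fun n => (fun y => x * y) '' U n) := by
    intro x
    refine Filter.hasBasis_iff.mpr fun S => ?_
    constructor
    · intro hS
      obtain ⟨_, ⟨n, rfl⟩, hsub⟩ := (B.nhds_hasBasis x).mem_iff.mp hS
      exact ⟨n, trivial, hsub⟩
    · rintro ⟨n, -, hsub⟩
      exact (B.nhds_hasBasis x).mem_iff.mpr ⟨U n, ⟨n, rfl⟩, hsub⟩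
  -- σ is coarser than the ambient topology
  have hle : ∀ S : Set G, IsOpen[B.topology] S → IsOpen S := by
    intro S hS
    rw [isOpen_iff_mem_nhds]
    intro x hx
    have hSx : S ∈ @nhds G B.topology x := @IsOpen.mem_nhds G B.topology _ _ hS hx
    obtain ⟨n, -, hsub⟩ := (hUbx x).mem_iff.mp hSx
    have himg : IsOpen ((fun y => x * y) '' U n) :=
      (Homeomorph.mulLeft x).isOpenMap _ (hUo n)
    have hximg : x ∈ (fun y => x * y) '' U n := ⟨1, hU1 n, mul_one x⟩
    exact Filter.mem_of_superset (himg.mem_nhds hximg) hsub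
  -- T2
  have hT2 : @T2Space G B.topology := by
    letI := B.topology
    haveI := hgrp
    have hcl : closure ({1} : Set G) ⊆ {1} := by
      intro x hx
      have hmem : ∀ n, x ∈ U n := by
        intro n
        have h1 : (fun y => x * y) '' U n ∈ 𝓝 x :=
          (hUbx x).mem_iff.mpr ⟨n, trivial, le_rfl⟩
        obtain ⟨y, hy1, hy2⟩ := mem_closure_iff_nhds.mp hx _ h1
        obtain ⟨u, hu, hxy⟩ := hy1
        have hy : y = (1:G) := hy2
        have hxu : x = u⁻¹ := by
          rw [hy] at hxy
          exact (mul_eq_one_iff_eq_inv).mp hxy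
        rw [hxu, ← hUsymm n]
        exact Set.inv_mem_inv.mpr hu
      have hxt : x ∈ ⋂ n, t n := Set.mem_iInter.mpr fun n => hUt n (hmem n)
      exact htsub hxt
    have hclosed : IsClosed ({1} : Set G) := isClosed_of_closure_subset hcl
    exact (IsTopologicalGroup.t2Space_iff_one_closed).mpr hclosed
  -- first countability
  have hfc : @FirstCountableTopology G B.topology := by
    letI := B.topology
    exact ⟨fun x => (hUbx x).isCountablyGenerated⟩
  -- continuity of the identity from the ambient topology
  have hcid : @Continuous G G _ B.topology (⇑(MonoidHom.id G)) := by
    rw [continuous_def]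
    intro S hS
    have h2 : IsOpen S := hle S hS
    simpa using h2
  -- sequential completeness via h-completeness
  have hseqc : @SeqComplete G _ B.topology hgrp :=
    @hs G _ B.topology hgrp hT2 (MonoidHom.id G) hcid Function.surjective_id
  -- countably generated uniformity
  have hcgU : @Filter.IsCountablyGenerated (G × G)
      (@uniformity G (@IsTopologicalGroup.rightUniformSpace G _ B.topology hgrp)) := by
    have he : (@uniformity G (@IsTopologicalGroup.rightUniformSpace G _ B.topology hgrp))
        = Filter.comap (fun p : G × G => p.2 / p.1) (@nhds G B.topology 1) := by
        rw [show (fun p : G × G => p.2 / p.1) = fun p => p.2 * p.1⁻¹ from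
          funext fun p => div_eq_mul_inv _ _]; rfl
    rw [he]
    haveI := hUb.isCountablyGenerated
    exact Filter.comap.isCountablyGenerated _ _
  -- completeness
  have hcomp : @CompleteSpace G (@IsTopologicalGroup.rightUniformSpace G _ B.topology hgrp) := by
    letI := B.topology
    haveI := hgrp
    letI σu := @IsTopologicalGroup.rightUniformSpace G _ B.topology hgrp
    haveI : Filter.IsCountablyGenerated (𝓤 G) := hcgU
    exact UniformSpace.complete_of_cauchySeq_tendsto hseqc
  -- Baire
  have hbaire : @BaireSpace G B.topology := by
    letI σu := @IsTopologicalGroup.rightUniformSpace G _ B.topology hgrp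
    haveI : Filter.IsCountablyGenerated (𝓤 G) := hcgU
    letI pm : PseudoMetricSpace G := UniformSpace.pseudoMetricSpace G
    haveI : CompleteSpace G := hcomp
    exact @BaireSpace.of_completelyPseudoMetrizable G B.topology
      (@TopologicalSpace.IsCompletelyPseudoMetrizableSpace.of_completeSpace_pseudometrizable G σu hcomp hcgU)
  -- separability and second countability
  have hsep : @TopologicalSpace.SeparableSpace G B.topology := by
    letI := B.topology
    refine ⟨⟨⋃ n, Set.range (E n), Set.countable_iUnion (fun n => Set.countable_range _), ?_⟩⟩
    intro x
    rw [mem_closure_iff_nhds]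
    intro T hT
    obtain ⟨n, -, hsub⟩ := (hUbx x).mem_iff.mp hT
    obtain ⟨k, hk⟩ := hUconj x⁻¹ n
    have hxcov : x ∈ U k * Set.range (E k) := hUcov k (Set.mem_univ x)
    obtain ⟨u, hu, d, ⟨i, rfl⟩, hxud⟩ := hxcov
    have huinv : u⁻¹ ∈ U k := by rw [← hUsymm k]; exact Set.inv_mem_inv.mpr hu
    have hconj : x⁻¹ * u⁻¹ * x ∈ U n := by
      have := hk u⁻¹ huinv
      simpa using this
    refine ⟨E k i, hsub ⟨x⁻¹ * u⁻¹ * x, hconj, ?_⟩, Set.mem_iUnion.mpr ⟨k, ⟨i, rfl⟩⟩⟩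
    rw [← hxud]; group
  have hsc : @SecondCountableTopology G B.topology := by
    letI σu := @IsTopologicalGroup.rightUniformSpace G _ B.topology hgrp
    haveI : Filter.IsCountablyGenerated (𝓤 G) := hcgU
    haveI := hsep
    exact UniformSpace.secondCountable_of_separable G
  exact ⟨⟨B.topology, hgrp, hT2, hsc, hfc, hbaire, hseqc, U, hUb, hUbx, hUt, hUo, hU1, hle⟩⟩


theorem cpc_to_sc [T2Space G] (hω : OmegaPrecompact G) (hs : SeqHComplete G)
    (hcpc : CountablePseudocharacter G) : SecondCountableTopology G := by
  classical
  obtain ⟨s, hso, hsint⟩ := hcpc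
  have hs1 : ∀ n, (1:G) ∈ s n := fun n =>
    Set.mem_iInter.mp (by rw [hsint]; exact Set.mem_singleton 1) n
  have hssub : (⋂ n, s n) ⊆ {1} := by rw [hsint]
  obtain ⟨P0⟩ := sigma_main hω hs s hso hs1 hssub
  have claim : ∀ O : Set G, IsOpen O → (1:G) ∈ O → O ∈ @nhds G P0.σ 1 := by
    intro O hOo hO1
    obtain ⟨P1⟩ := sigma_main hω hs (fun n => s n ∩ (P0.U n ∩ O))
      (fun n => (hso n).inter ((P0.Uopen n).inter hOo))
      (fun n => ⟨hs1 n, P0.Uone n, hO1⟩)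
      (fun x hx => hssub (Set.mem_iInter.mpr fun n => (Set.mem_iInter.mp hx n).1))
    have hoo : ∀ S : Set G, IsOpen[P0.σ] S → IsOpen[P1.σ] S := by
      intro S hS
      refine (@isOpen_iff_mem_nhds G P1.σ S).mpr fun x hx => ?_
      obtain ⟨n, -, hsub⟩ := (P0.Ubasis_x x).mem_iff.mp
        (@IsOpen.mem_nhds G P0.σ _ _ hS hx)
      refine (P1.Ubasis_x x).mem_iff.mpr ⟨n, trivial, ?_⟩
      exact (Set.image_mono (fun z hz => (P1.Ut n hz).2.1)).trans hsub
    have hcont : @Continuous G G P1.σ P0.σ (⇑(MonoidHom.id G)) := by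
      refine (@continuous_def G G P1.σ P0.σ _).mpr fun S hS => ?_
      simpa using hoo S hS
    have hO1' : O ∈ @nhds G P1.σ 1 :=
      P1.Ubasis.mem_iff.mpr ⟨0, trivial, fun x hx => (P1.Ut 0 hx).2.2⟩
    have hcov1 : ∀ V ∈ @nhds G P1.σ 1, ∃ D : Set G, D.Countable ∧ V * D = Set.univ := by
      intro V hV
      obtain ⟨n, -, hsub⟩ := P1.Ubasis.mem_iff.mp hV
      exact hω V (Filter.mem_of_superset ((P1.Uopen n).mem_nhds (P1.Uone n)) hsub)
    have happ := @openmap_aux G G _ P1.σ P1.grp P1.fc _ P0.σ P0.grp P0.t2 P0.fc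
      P0.baire P1.seqc hcov1 (MonoidHom.id G) hcont Function.surjective_id O hO1'
    simpa using happ
  have heq : P0.σ = ‹TopologicalSpace G› := by
    refine TopologicalSpace.ext_iff.mpr fun S => ⟨P0.le S, fun hS => ?_⟩
    refine (@isOpen_iff_mem_nhds G P0.σ S).mpr fun x hx => ?_
    have hO' : IsOpen ((fun y => x * y) ⁻¹' S) := hS.preimage (continuous_mul_left x)
    have h1' : (1:G) ∈ (fun y => x * y) ⁻¹' S := by
      simp only [Set.mem_preimage, mul_one]; exact hx
    obtain ⟨n, -, hsub⟩ := P0.Ubasis.mem_iff.mp (claim _ hO' h1')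
    refine (P0.Ubasis_x x).mem_iff.mpr ⟨n, trivial, ?_⟩
    rintro _ ⟨u, hu, rfl⟩
    exact hsub hu
  exact heq ▸ P0.sc


lemma sc_network (X : Type u) [TopologicalSpace X] [SecondCountableTopology X] :
    HasCountableNetwork X := by
  obtain ⟨b, hbc, -, hbbasis⟩ := TopologicalSpace.exists_countable_basis X
  refine ⟨b, hbc, fun U hU => ⟨{s ∈ b | s ⊆ U}, Set.sep_subset _ _, ?_⟩⟩
  exact (hbbasis.open_eq_sUnion' hU).symm

lemma network_cpc [T2Space G] (h : HasCountableNetwork G) : CountablePseudocharacter G := by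
  classical
  obtain ⟨N, hNc, hNnet⟩ := h
  set C := {S ∈ N | (1:G) ∉ closure S} with hC
  set D := insert Set.univ ((fun S => (closure S)ᶜ) '' C) with hD
  have hDc : D.Countable := (((hNc.mono (Set.sep_subset _ _))).image _).insert _
  have hDo : ∀ T ∈ D, IsOpen T := by
    rintro T (rfl | ⟨S, hS, rfl⟩)
    · exact isOpen_univ
    · exact isClosed_closure.isOpen_compl
  have hDint : ⋂₀ D = ({1} : Set G) := by
    apply Set.Subset.antisymm
    · intro x hx
      by_contra hx1
      have hxne : x ≠ 1 := by
        intro hxx; apply hx1; rw [hxx]; exact rfl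
      have hmem : ({1}ᶜ : Set G) ∈ 𝓝 x := by
        refine (isOpen_compl_singleton).mem_nhds ?_
        simpa using hxne
      obtain ⟨K, ⟨hKn, hKc⟩, hKsub⟩ := (closed_nhds_basis x).mem_iff.mp hmem
      have hxV : x ∈ interior K := mem_interior_iff_mem_nhds.mpr hKn
      obtain ⟨Ssub, hSsubN, hSuni⟩ := hNnet (interior K) isOpen_interior
      have hxS : x ∈ ⋃₀ Ssub := by rw [hSuni]; exact hxV
      obtain ⟨S, hSmem, hxSm⟩ := hxS
      have hScl : closure S ⊆ K := by
        have h1 : S ⊆ interior K := by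
          intro z hz; rw [← hSuni]; exact ⟨S, hSmem, hz⟩
        calc closure S ⊆ closure K := closure_mono (h1.trans interior_subset)
          _ = K := hKc.closure_eq
      have hSC : S ∈ C := ⟨hSsubN hSmem, fun h1c => (hKsub (hScl h1c)) rfl⟩
      have hxc : x ∈ (closure S)ᶜ := hx _ (Set.mem_insert_iff.mpr (Or.inr ⟨S, hSC, rfl⟩))
      exact hxc (subset_closure hxSm)
    · intro x hx
      rw [Set.mem_singleton_iff] at hx; subst hx
      rintro T (rfl | ⟨S, hS, rfl⟩)
      · exact Set.mem_univ _
      · exact hS.2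
  have hDne : D.Nonempty := ⟨Set.univ, Set.mem_insert _ _⟩
  obtain ⟨f, hf⟩ := hDc.exists_eq_range hDne
  refine ⟨f, fun n => hDo _ (by rw [hf]; exact Set.mem_range_self n), ?_⟩
  rw [← Set.sInter_range, ← hf, hDint]

lemma metrizable_cpc [T2Space G] (h : TopologicalSpace.MetrizableSpace G) :
    CountablePseudocharacter G := by
  haveI := h
  haveI : FirstCountableTopology G := inferInstance
  obtain ⟨b, hb⟩ := (𝓝 (1:G)).exists_antitone_basis
  refine ⟨fun n => interior (b n), fun n => isOpen_interior, ?_⟩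
  apply Set.Subset.antisymm
  · intro x hx
    have hxa : ∀ S ∈ 𝓝 (1:G), x ∈ S := by
      intro S hS
      obtain ⟨n, -, hsub⟩ := hb.1.mem_iff.mp hS
      exact hsub (interior_subset (Set.mem_iInter.mp hx n))
    by_contra hx1
    have hxne : (1:G) ≠ x := by
      intro hxx; apply hx1; rw [← hxx]; exact rfl
    have : x ∈ ({x}ᶜ : Set G) := hxa _ ((isOpen_compl_singleton).mem_nhds (by simpa using hxne))
    exact this rfl
  · intro x hx
    rw [Set.mem_singleton_iff] at hx; subst hx
    exact Set.mem_iInter.mpr fun n =>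
      mem_interior_iff_mem_nhds.mpr (hb.1.mem_of_mem trivial)

lemma sc_metrizable [T2Space G] (h : SecondCountableTopology G) :
    TopologicalSpace.MetrizableSpace G := by
  haveI := h
  infer_instance


end DTaux

/-- For ω-precompact sequentially h-complete groups: second countable,
countable network, countable pseudocharacter, and metrizable are equivalent. -/
theorem stmt4 (G : Type u) [Group G] [TopologicalSpace G] [IsTopologicalGroup G] [T2Space G]
    (hω : OmegaPrecompact G) (hs : SeqHComplete G) :
    (SecondCountableTopology G ↔ HasCountableNetwork G) ∧
    (HasCountableNetwork G ↔ CountablePseudocharacter G) ∧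
    (CountablePseudocharacter G ↔ TopologicalSpace.MetrizableSpace G) := by
  have hard : CountablePseudocharacter G → SecondCountableTopology G :=
    fun h => DTaux.cpc_to_sc hω hs h
  have e1 : SecondCountableTopology G → HasCountableNetwork G :=
    fun h => @DTaux.sc_network G _ h
  have e2 : HasCountableNetwork G → CountablePseudocharacter G := DTaux.network_cpc
  have e3 : TopologicalSpace.MetrizableSpace G → CountablePseudocharacter G :=
    DTaux.metrizable_cpc
  have e4 : SecondCountableTopology G → TopologicalSpace.MetrizableSpace G :=
    DTaux.sc_metrizable
  exact ⟨⟨e1, fun h => hard (e2 h)⟩, ⟨e2, fun h => e1 (hard h)⟩,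
    ⟨fun h => e4 (hard h), e3⟩⟩
end
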